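/- arXiv:2303.18073 — 6 statements merged into one kernel-verified Lean document; each statement's English description precedes it below -/
import Mathlib

section
/- Let $c_i \geq 0$ be a sequence of nonnegative reals and let $0 < b < a$. Then $\sum_{i=1}^{N} i^a c_i = \mathcal{O}(N^b)$ as $N \to \infty$ if and only if $\sum_{i=N+1}^{\infty} c_i = \mathcal{O}(N^{b-a})$ as $N \to \infty$. -/
section DurenAux
open Filter Asymptotics Finset

lemma duren_pow_rpow (k : ℕ) (y : ℝ) : ((2:ℝ) ^ k) ^ y = ((2:ℝ) ^ y) ^ k := by
  rw [← Real.rpow_natCast 2 k, ← Real.rpow_mul (by norm_num), mul_comm,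
      Real.rpow_mul (by norm_num), Real.rpow_natCast]

lemma duren_aux_forward (c : ℕ → ℝ) (hc : ∀ i, 0 ≤ c i) (a b : ℝ) (hb : 0 < b)
    (hba : b < a) (K : ℝ) (hK0 : 0 ≤ K)
    (hK : ∀ N : ℕ, 1 ≤ N → ∑ i ∈ Finset.Ioc 0 N, (i:ℝ)^a * c i ≤ K * (N:ℝ)^b) :
    ∀ N : ℕ, 1 ≤ N → ∀ s : Finset ℕ,
      ∑ i ∈ s, c (N+1+i) ≤ (K * (2:ℝ)^b * (1 - (2:ℝ)^(b-a))⁻¹) * (N:ℝ)^(b-a) := by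
  set r : ℝ := (2:ℝ) ^ (b - a) with hrdef
  have hr0 : 0 < r := Real.rpow_pos_of_pos (by norm_num) _
  have hr1 : r < 1 := Real.rpow_lt_one_of_one_lt_of_neg (by norm_num) (by linarith)
  -- block bound
  have hblock : ∀ n : ℕ, 1 ≤ n → ∑ i ∈ Finset.Ioc n (2*n), c i ≤ K * (2:ℝ)^b * (n:ℝ)^(b-a) := by
    intro n hn
    have hn0 : (0:ℝ) < (n:ℝ) := by exact_mod_cast hn
    have hna : (0:ℝ) < (n:ℝ)^a := Real.rpow_pos_of_pos hn0 a
    have h1 : (n:ℝ)^a * ∑ i ∈ Finset.Ioc n (2*n), c i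
        ≤ ∑ i ∈ Finset.Ioc n (2*n), (i:ℝ)^a * c i := by
      rw [Finset.mul_sum]
      apply Finset.sum_le_sum
      intro i hi
      have hni : (n:ℝ) ≤ (i:ℝ) := by exact_mod_cast (Finset.mem_Ioc.mp hi).1.le
      exact mul_le_mul_of_nonneg_right (Real.rpow_le_rpow hn0.le hni (by linarith)) (hc i)
    have h2 : ∑ i ∈ Finset.Ioc n (2*n), (i:ℝ)^a * c i
        ≤ ∑ i ∈ Finset.Ioc 0 (2*n), (i:ℝ)^a * c i :=
      Finset.sum_le_sum_of_subset_of_nonneg (Finset.Ioc_subset_Ioc (Nat.zero_le n) le_rfl)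
        (fun i _ _ => mul_nonneg (Real.rpow_nonneg (Nat.cast_nonneg i) a) (hc i))
    have h3 := hK (2*n) (by omega)
    have h4 : ((2*n:ℕ):ℝ)^b = (2:ℝ)^b * (n:ℝ)^b := by
      push_cast
      rw [Real.mul_rpow (by norm_num) (Nat.cast_nonneg n)]
    have h5 : (n:ℝ)^a * ∑ i ∈ Finset.Ioc n (2*n), c i ≤ K * (2:ℝ)^b * (n:ℝ)^b := by
      have := h1.trans (h2.trans h3)
      rw [h4] at this; linarith [this]
    rw [Real.rpow_sub hn0, ← mul_div_assoc, le_div_iff₀ hna, mul_comm]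
    exact h5
  -- dyadic claim
  have hclaim : ∀ N : ℕ, 1 ≤ N → ∀ m : ℕ,
      ∑ i ∈ Finset.Ioc N (2^m * N), c i
        ≤ K * (2:ℝ)^b * (N:ℝ)^(b-a) * ∑ k ∈ Finset.range m, r^k := by
    intro N hN m
    induction m with
    | zero => simp
    | succ m ih =>
      have h1N : 1 ≤ 2^m * N := Nat.one_le_iff_ne_zero.mpr (by positivity)
      have hle1 : N ≤ 2^m * N := Nat.le_mul_of_pos_left N (by positivity)
      have hle2 : 2^m * N ≤ 2^(m+1) * N := Nat.mul_le_mul_right N (Nat.pow_le_pow_right (by norm_num) (by omega))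
      have hsplit := Finset.sum_Ioc_consecutive c hle1 hle2
      have hcast : ((2^m*N:ℕ):ℝ)^(b-a) = r^m * (N:ℝ)^(b-a) := by
        push_cast
        rw [Real.mul_rpow (by positivity) (Nat.cast_nonneg N), duren_pow_rpow]
      have hb2 : Finset.Ioc (2^m*N) (2^(m+1)*N) = Finset.Ioc (2^m*N) (2*(2^m*N)) := by
        congr 1; ring
      have hblk : ∑ i ∈ Finset.Ioc (2^m*N) (2^(m+1)*N), c i
          ≤ K * (2:ℝ)^b * (r^m * (N:ℝ)^(b-a)) := by
        rw [hb2, ← hcast]; exact hblock _ h1N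
      rw [← hsplit, Finset.sum_range_succ]
      nlinarith [ih, hblk]
  -- conclude
  intro N hN s
  obtain ⟨M, hsM⟩ := s.exists_nat_subset_range
  have h1 : ∑ i ∈ s, c (N+1+i) ≤ ∑ i ∈ Finset.range M, c (N+1+i) :=
    Finset.sum_le_sum_of_subset_of_nonneg hsM (fun i _ _ => hc _)
  have h2 : ∑ i ∈ Finset.range M, c (N+1+i) = ∑ j ∈ Finset.Ico (N+1) (N+1+M), c j := by
    rw [Finset.sum_Ico_eq_sum_range]; simp
  set m := N + M with hm
  have hmlt : N + M < 2^m * N := by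
    calc N + M < 2^(N+M) := Nat.lt_two_pow_self
    _ ≤ 2^m * N := Nat.le_mul_of_pos_right _ hN
  have h3 : Finset.Ico (N+1) (N+1+M) ⊆ Finset.Ioc N (2^m * N) := by
    intro i hi; rw [Finset.mem_Ico] at hi; rw [Finset.mem_Ioc]; omega
  have h4 : ∑ j ∈ Finset.Ico (N+1) (N+1+M), c j ≤ ∑ j ∈ Finset.Ioc N (2^m*N), c j :=
    Finset.sum_le_sum_of_subset_of_nonneg h3 (fun i _ _ => hc i)
  have h5 := hclaim N hN m
  have h6 : ∑ k ∈ Finset.range m, r^k ≤ (1-r)⁻¹ := by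
    calc ∑ k ∈ Finset.range m, r^k
        ≤ ∑' k, r^k := Summable.sum_le_tsum _ (fun k _ => by positivity)
          (summable_geometric_of_lt_one hr0.le hr1)
      _ = (1-r)⁻¹ := tsum_geometric_of_lt_one hr0.le hr1
  have hpos : (0:ℝ) ≤ K * (2:ℝ)^b * (N:ℝ)^(b-a) := by positivity
  calc ∑ i ∈ s, c (N+1+i) ≤ ∑ j ∈ Finset.Ioc N (2^m*N), c j := by
        rw [h2] at h1; exact h1.trans h4
    _ ≤ K * (2:ℝ)^b * (N:ℝ)^(b-a) * ∑ k ∈ Finset.range m, r^k := h5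
    _ ≤ K * (2:ℝ)^b * (N:ℝ)^(b-a) * (1-r)⁻¹ := mul_le_mul_of_nonneg_left h6 hpos
    _ = (K * (2:ℝ)^b * (1 - r)⁻¹) * (N:ℝ)^(b-a) := by ring

lemma duren_Icc_eq (N : ℕ) : Finset.Icc 1 N = Finset.Ioc 0 N := by
  ext i; simp [Finset.mem_Icc, Finset.mem_Ioc, Nat.lt_iff_add_one_le]

lemma duren_fwd (c : ℕ → ℝ) (hc : ∀ i, 0 ≤ c i) (a b : ℝ) (hb : 0 < b) (hba : b < a)
    (h : (fun N : ℕ => ∑ i ∈ Finset.Icc 1 N, (i : ℝ) ^ a * c i) =O[atTop]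
      (fun N : ℕ => (N : ℝ) ^ b)) :
    Summable c ∧
      (fun N : ℕ => ∑' i : ℕ, c (N + 1 + i)) =O[atTop] (fun N : ℕ => (N : ℝ) ^ (b - a)) := by
  rw [isBigO_iff] at h
  obtain ⟨C, hC⟩ := h
  rw [eventually_atTop] at hC
  obtain ⟨N₀, hN₀⟩ := hC
  set M := max N₀ 1 with hMdef
  have hM1 : 1 ≤ M := le_max_right _ _
  have hMR : (0:ℝ) < (M:ℝ) := by exact_mod_cast hM1
  have hSnn : ∀ N : ℕ, (0:ℝ) ≤ ∑ i ∈ Finset.Ioc 0 N, (i:ℝ)^a * c i :=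
    fun N => Finset.sum_nonneg fun i _ =>
      mul_nonneg (Real.rpow_nonneg (Nat.cast_nonneg i) a) (hc i)
  have hnorm : ∀ N : ℕ, 1 ≤ N → N₀ ≤ N →
      ∑ i ∈ Finset.Ioc 0 N, (i:ℝ)^a * c i ≤ C * (N:ℝ)^b := by
    intro N h1 h2
    have := hN₀ N h2
    rw [duren_Icc_eq, Real.norm_eq_abs, Real.norm_eq_abs, abs_of_nonneg (hSnn N),
      abs_of_nonneg (Real.rpow_nonneg (Nat.cast_nonneg N) b)] at this
    exact this
  have hC0 : 0 ≤ C := by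
    have h1 := hnorm M hM1 (le_max_left _ _)
    have h2 := hSnn M
    have h3 : (0:ℝ) < (M:ℝ)^b := Real.rpow_pos_of_pos hMR b
    nlinarith
  -- uniform bound
  set K := C * (M:ℝ)^b with hKdef
  have hK0 : 0 ≤ K := mul_nonneg hC0 (Real.rpow_nonneg hMR.le b)
  have hK : ∀ N : ℕ, 1 ≤ N → ∑ i ∈ Finset.Ioc 0 N, (i:ℝ)^a * c i ≤ K * (N:ℝ)^b := by
    intro N hN
    have hNM1 : 1 ≤ N * M := Nat.one_le_iff_ne_zero.mpr (by positivity)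
    have hle : ∑ i ∈ Finset.Ioc 0 N, (i:ℝ)^a * c i
        ≤ ∑ i ∈ Finset.Ioc 0 (N*M), (i:ℝ)^a * c i :=
      Finset.sum_le_sum_of_subset_of_nonneg
        (Finset.Ioc_subset_Ioc le_rfl (Nat.le_mul_of_pos_right N hM1))
        (fun i _ _ => mul_nonneg (Real.rpow_nonneg (Nat.cast_nonneg i) a) (hc i))
    have h2 := hnorm (N*M) hNM1 (le_trans (le_max_left N₀ 1) (Nat.le_mul_of_pos_left M hN))
    have h3 : ((N*M:ℕ):ℝ)^b = (N:ℝ)^b * (M:ℝ)^b := by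
      push_cast; rw [Real.mul_rpow (Nat.cast_nonneg N) hMR.le]
    calc ∑ i ∈ Finset.Ioc 0 N, (i:ℝ)^a * c i ≤ C * ((N*M:ℕ):ℝ)^b := hle.trans h2
      _ = K * (N:ℝ)^b := by rw [h3, hKdef]; ring
  have hP := duren_aux_forward c hc a b hb hba K hK0 hK
  set K2 := K * (2:ℝ)^b * (1 - (2:ℝ)^(b-a))⁻¹ with hK2def
  -- summability
  have hsum2 : Summable (fun i => c (1+1+i)) := by
    apply summable_of_sum_range_le (fun i => hc _)
    intro n
    have := hP 1 le_rfl (Finset.range n)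
    simpa using this
  have hsum : Summable c := by
    have h2' : Summable (fun n => c (n + 2)) := hsum2.congr (fun i => congrArg c (by omega))
    exact (summable_nat_add_iff 2).mp h2'
  refine ⟨hsum, ?_⟩
  have hshift : ∀ N : ℕ, Summable (fun i => c (N+1+i)) := by
    intro N
    exact ((summable_nat_add_iff (N+1)).mpr hsum).congr (fun i => congrArg c (by omega))
  rw [isBigO_iff]
  refine ⟨K2, eventually_atTop.mpr ⟨1, fun N hN => ?_⟩⟩
  have hT : ∑' i, c (N+1+i) ≤ K2 * (N:ℝ)^(b-a) :=
    Summable.tsum_le_of_sum_le (hshift N) (hP N hN)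
  have hTnn : (0:ℝ) ≤ ∑' i, c (N+1+i) := tsum_nonneg (fun i => hc _)
  rw [Real.norm_eq_abs, Real.norm_eq_abs, abs_of_nonneg hTnn,
    abs_of_nonneg (Real.rpow_nonneg (Nat.cast_nonneg N) _)]
  exact hT

lemma duren_bwd (c : ℕ → ℝ) (hc : ∀ i, 0 ≤ c i) (a b : ℝ) (hb : 0 < b) (hba : b < a)
    (hsum : Summable c)
    (h : (fun N : ℕ => ∑' i : ℕ, c (N + 1 + i)) =O[atTop] (fun N : ℕ => (N : ℝ) ^ (b - a))) :
    (fun N : ℕ => ∑ i ∈ Finset.Icc 1 N, (i : ℝ) ^ a * c i) =O[atTop]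
      (fun N : ℕ => (N : ℝ) ^ b) := by
  have hshift : ∀ N : ℕ, Summable (fun i => c (N+1+i)) := by
    intro N
    exact ((summable_nat_add_iff (N+1)).mpr hsum).congr (fun i => congrArg c (by omega))
  have hTnn : ∀ N : ℕ, (0:ℝ) ≤ ∑' i, c (N+1+i) := fun N => tsum_nonneg (fun i => hc _)
  set Tot := ∑' i, c i with hTot
  have hTotnn : 0 ≤ Tot := tsum_nonneg hc
  have hTle : ∀ N : ℕ, ∑' i, c (N+1+i) ≤ Tot := by
    intro N
    exact Summable.tsum_le_tsum_of_inj (fun i => N+1+i)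
      (add_right_injective (N+1)) (fun j _ => hc j) (fun i => le_rfl) (hshift N) hsum
  rw [isBigO_iff] at h
  obtain ⟨C, hC⟩ := h
  rw [eventually_atTop] at hC
  obtain ⟨N₀, hN₀⟩ := hC
  set M := max N₀ 1 with hMdef
  have hM1 : 1 ≤ M := le_max_right _ _
  have hMR : (0:ℝ) < (M:ℝ) := by exact_mod_cast hM1
  have hnorm : ∀ N : ℕ, N₀ ≤ N → ∑' i, c (N+1+i) ≤ C * (N:ℝ)^(b-a) := by
    intro N h2
    have := hN₀ N h2
    rw [Real.norm_eq_abs, Real.norm_eq_abs, abs_of_nonneg (hTnn N),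
      abs_of_nonneg (Real.rpow_nonneg (Nat.cast_nonneg N) _)] at this
    exact this
  have hC0 : 0 ≤ C := by
    have h1 := hnorm M (le_max_left _ _)
    have h3 : (0:ℝ) < (M:ℝ)^(b-a) := Real.rpow_pos_of_pos hMR _
    nlinarith [hTnn M]
  set C' := max C (Tot * (M:ℝ)^(a-b)) with hC'def
  have hC'0 : 0 ≤ C' := le_trans hC0 (le_max_left _ _)
  have hC' : ∀ N : ℕ, 1 ≤ N → ∑' i, c (N+1+i) ≤ C' * (N:ℝ)^(b-a) := by
    intro N hN
    have hNR : (0:ℝ) < (N:ℝ) := by exact_mod_cast hN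
    have hNba : (0:ℝ) ≤ (N:ℝ)^(b-a) := Real.rpow_nonneg hNR.le _
    rcases le_or_gt N₀ N with hcase | hcase
    · exact (hnorm N hcase).trans
        (mul_le_mul_of_nonneg_right (le_max_left _ _) hNba)
    · have hNM : (N:ℝ) ≤ (M:ℝ) := by
        exact_mod_cast le_trans hcase.le (le_max_left _ _)
      have h1 : (M:ℝ)^(b-a) ≤ (N:ℝ)^(b-a) :=
        Real.rpow_le_rpow_of_nonpos hNR hNM (by linarith)
      have h2 : (M:ℝ)^(a-b) * (M:ℝ)^(b-a) = 1 := by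
        rw [← Real.rpow_add hMR]; norm_num
      calc ∑' i, c (N+1+i) ≤ Tot := hTle N
        _ = Tot * (M:ℝ)^(a-b) * (M:ℝ)^(b-a) := by rw [mul_assoc, h2, mul_one]
        _ ≤ Tot * (M:ℝ)^(a-b) * (N:ℝ)^(b-a) := by
            apply mul_le_mul_of_nonneg_left h1
            exact mul_nonneg hTotnn (Real.rpow_nonneg hMR.le _)
        _ ≤ C' * (N:ℝ)^(b-a) :=
            mul_le_mul_of_nonneg_right (le_max_right _ _) hNba
  -- tail bound for finite pieces
  have hTail : ∀ n m : ℕ, ∑ i ∈ Finset.Ioc n m, c i ≤ ∑' i, c (n+1+i) := by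
    intro n m
    have h1 : Finset.Ioc n m = Finset.Ico (n+1) (m+1) := by
      ext i; simp [Finset.mem_Ioc, Finset.mem_Ico]
    rw [h1, Finset.sum_Ico_eq_sum_range]
    exact Summable.sum_le_tsum _ (fun i _ => hc _) (hshift n)
  set r : ℝ := (2:ℝ)^b with hrdef
  have hr1 : 1 < r := by
    rw [hrdef]
    exact Real.one_lt_rpow_iff_of_pos (by norm_num) |>.mpr (Or.inl ⟨by norm_num, hb⟩)
  have hr0 : 0 < r := lt_trans one_pos hr1
  -- block bound
  have hblock : ∀ k : ℕ, ∑ i ∈ Finset.Ioc (2^k : ℕ) (2^(k+1) : ℕ), (i:ℝ)^a * c i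
      ≤ C' * (2:ℝ)^a * r^k := by
    intro k
    have hpa : (0:ℝ) ≤ ((2^(k+1):ℕ):ℝ)^a := Real.rpow_nonneg (Nat.cast_nonneg _) _
    have h2 : ∑ i ∈ Finset.Ioc (2^k : ℕ) (2^(k+1) : ℕ), (i:ℝ)^a * c i
        ≤ ((2^(k+1):ℕ):ℝ)^a * ∑ i ∈ Finset.Ioc (2^k : ℕ) (2^(k+1) : ℕ), c i := by
      rw [Finset.mul_sum]
      apply Finset.sum_le_sum
      intro i hi
      have : (i:ℝ) ≤ ((2^(k+1):ℕ):ℝ) := by exact_mod_cast (Finset.mem_Ioc.mp hi).2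
      exact mul_le_mul_of_nonneg_right
        (Real.rpow_le_rpow (Nat.cast_nonneg i) this (by linarith)) (hc i)
    have h3 := hTail (2^k) (2^(k+1))
    have h4 := hC' (2^k) Nat.one_le_two_pow
    have h5 : ∑ i ∈ Finset.Ioc (2^k : ℕ) (2^(k+1) : ℕ), (i:ℝ)^a * c i
        ≤ ((2^(k+1):ℕ):ℝ)^a * (C' * ((2^k:ℕ):ℝ)^(b-a)) :=
      h2.trans (mul_le_mul_of_nonneg_left (h3.trans h4) hpa)
    have e1 : ((2^(k+1):ℕ):ℝ)^a = (2:ℝ)^a * ((2:ℝ)^a)^k := by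
      push_cast
      rw [pow_succ, mul_comm ((2:ℝ)^k) 2, Real.mul_rpow (by norm_num) (by positivity),
        duren_pow_rpow]
    have e2 : ((2^k:ℕ):ℝ)^(b-a) = ((2:ℝ)^(b-a))^k := by
      push_cast; rw [duren_pow_rpow]
    have e4 : (2:ℝ)^a * (2:ℝ)^(b-a) = r := by
      rw [hrdef, ← Real.rpow_add (by norm_num : (0:ℝ) < 2)]; norm_num
    rw [e1, e2] at h5
    calc ∑ i ∈ Finset.Ioc (2^k : ℕ) (2^(k+1) : ℕ), (i:ℝ)^a * c i
        ≤ (2:ℝ)^a * ((2:ℝ)^a)^k * (C' * ((2:ℝ)^(b-a))^k) := h5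
      _ = C' * (2:ℝ)^a * (((2:ℝ)^a) * ((2:ℝ)^(b-a)))^k := by rw [mul_pow]; ring
      _ = C' * (2:ℝ)^a * r^k := by rw [e4]
  -- dyadic sum bound
  have hG : ∀ K : ℕ, ∑ i ∈ Finset.Ioc 1 (2^K : ℕ), (i:ℝ)^a * c i
      ≤ C' * (2:ℝ)^a * ∑ k ∈ Finset.range K, r^k := by
    intro K
    induction K with
    | zero => simp
    | succ K ih =>
      have hle1 : 1 ≤ 2^K := Nat.one_le_two_pow
      have hle2 : 2^K ≤ 2^(K+1) := Nat.pow_le_pow_right (by norm_num) (by omega)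
      have hsplit : ∑ i ∈ Finset.Ioc 1 (2^K : ℕ), (i:ℝ)^a * c i
          + ∑ i ∈ Finset.Ioc (2^K : ℕ) (2^(K+1) : ℕ), (i:ℝ)^a * c i
          = ∑ i ∈ Finset.Ioc 1 (2^(K+1) : ℕ), (i:ℝ)^a * c i :=
        Finset.sum_Ioc_consecutive _ hle1 hle2
      rw [← hsplit, Finset.sum_range_succ]
      have := hblock K
      nlinarith [ih, this]
  -- final bound
  have hfinal : ∀ N : ℕ, 1 ≤ N →
      ∑ i ∈ Finset.Ioc 0 N, (i:ℝ)^a * c i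
        ≤ (c 1 + C' * (2:ℝ)^a * (r / (r-1))) * (N:ℝ)^b := by
    intro N hN
    have hNR : (0:ℝ) < (N:ℝ) := by exact_mod_cast hN
    set K := Nat.log 2 N + 1 with hKdef
    have hNK : N ≤ 2^K := (Nat.lt_pow_succ_log_self (by norm_num) N).le
    have h2K : 2^K ≤ 2*N := by
      rw [hKdef, pow_succ]
      have := Nat.pow_log_le_self 2 (by omega : N ≠ 0)
      omega
    have hnn : ∀ i : ℕ, (0:ℝ) ≤ (i:ℝ)^a * c i :=
      fun i => mul_nonneg (Real.rpow_nonneg (Nat.cast_nonneg i) a) (hc i)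
    have hs1 : ∑ i ∈ Finset.Ioc 0 N, (i:ℝ)^a * c i
        ≤ ∑ i ∈ Finset.Ioc 0 (2^K : ℕ), (i:ℝ)^a * c i :=
      Finset.sum_le_sum_of_subset_of_nonneg (Finset.Ioc_subset_Ioc le_rfl hNK)
        (fun i _ _ => hnn i)
    have hsplit : ∑ i ∈ Finset.Ioc (0:ℕ) 1, (i:ℝ)^a * c i
        + ∑ i ∈ Finset.Ioc 1 (2^K : ℕ), (i:ℝ)^a * c i
        = ∑ i ∈ Finset.Ioc 0 (2^K : ℕ), (i:ℝ)^a * c i :=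
      Finset.sum_Ioc_consecutive _ (by norm_num) (Nat.one_le_two_pow)
    have h01 : Finset.Ioc (0:ℕ) 1 = {1} := rfl
    have hsum01 : ∑ i ∈ Finset.Ioc (0:ℕ) 1, (i:ℝ)^a * c i = c 1 := by
      rw [h01, Finset.sum_singleton]
      simp [Real.one_rpow]
    have hgeom : ∑ k ∈ Finset.range K, r^k ≤ r^K / (r-1) := by
      rw [geom_sum_eq (by linarith : r ≠ 1)]
      apply div_le_div_of_nonneg_right ?_ (by linarith)
      · linarith [pow_pos hr0 K]
    have hrK : r^K ≤ r * (N:ℝ)^b := by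
      have h1 : ((2^K:ℕ):ℝ) ≤ ((2*N:ℕ):ℝ) := by exact_mod_cast h2K
      have h2 : ((2^K:ℕ):ℝ)^b ≤ ((2*N:ℕ):ℝ)^b :=
        Real.rpow_le_rpow (by positivity) h1 hb.le
      have e1 : ((2^K:ℕ):ℝ)^b = r^K := by
        push_cast; rw [duren_pow_rpow, ← hrdef]
      have e2 : ((2*N:ℕ):ℝ)^b = r * (N:ℝ)^b := by
        push_cast
        rw [Real.mul_rpow (by norm_num) (Nat.cast_nonneg N), ← hrdef]
      rw [e1, e2] at h2; exact h2
    have hCa : (0:ℝ) ≤ C' * (2:ℝ)^a := by positivity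
    have hb1 : (1:ℝ) ≤ (N:ℝ)^b := by
      rw [show (1:ℝ) = (1:ℝ)^b by rw [Real.one_rpow]]
      exact Real.rpow_le_rpow (by norm_num) (by exact_mod_cast hN) hb.le
    have hstep1 : C' * (2:ℝ)^a * ∑ k ∈ Finset.range K, r^k
        ≤ C' * (2:ℝ)^a * (r^K/(r-1)) := mul_le_mul_of_nonneg_left hgeom hCa
    have hstep2 : C' * (2:ℝ)^a * (r^K/(r-1))
        ≤ C' * (2:ℝ)^a * ((r * (N:ℝ)^b)/(r-1)) :=
      mul_le_mul_of_nonneg_left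
        (div_le_div_of_nonneg_right hrK (by linarith)) hCa
    have hstep3 : c 1 ≤ c 1 * (N:ℝ)^b := le_mul_of_one_le_right (hc 1) hb1
    calc ∑ i ∈ Finset.Ioc 0 N, (i:ℝ)^a * c i
        ≤ ∑ i ∈ Finset.Ioc 0 (2^K : ℕ), (i:ℝ)^a * c i := hs1
      _ = c 1 + ∑ i ∈ Finset.Ioc 1 (2^K : ℕ), (i:ℝ)^a * c i := by
          rw [← hsplit, hsum01]
      _ ≤ c 1 + C' * (2:ℝ)^a * ∑ k ∈ Finset.range K, r^k := by
          linarith [hG K]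
      _ ≤ c 1 * (N:ℝ)^b + C' * (2:ℝ)^a * ((r * (N:ℝ)^b)/(r-1)) := by
          linarith
      _ = (c 1 + C' * (2:ℝ)^a * (r / (r-1))) * (N:ℝ)^b := by ring
  -- conclude
  rw [isBigO_iff]
  refine ⟨c 1 + C' * (2:ℝ)^a * (r / (r-1)), eventually_atTop.mpr ⟨1, fun N hN => ?_⟩⟩
  have hSnn : (0:ℝ) ≤ ∑ i ∈ Finset.Icc 1 N, (i:ℝ)^a * c i :=
    Finset.sum_nonneg fun i _ =>
      mul_nonneg (Real.rpow_nonneg (Nat.cast_nonneg i) a) (hc i)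
  rw [Real.norm_eq_abs, Real.norm_eq_abs, abs_of_nonneg hSnn,
    abs_of_nonneg (Real.rpow_nonneg (Nat.cast_nonneg N) b), duren_Icc_eq]
  exact hfinal N hN

end DurenAux

open Filter Asymptotics

/-- **Duren's Tauberian lemma.** For a nonnegative sequence `c` and `0 < b < a`,
the weighted partial sums `∑_{i=1}^N i^a c_i` are `O(N^b)` as `N → ∞` if and only if
the tail sums `∑_{i=N+1}^∞ c_i` are (well defined and) `O(N^{b-a})` as `N → ∞`. -/
theorem duren_lemma (c : ℕ → ℝ) (hc : ∀ i, 0 ≤ c i) (a b : ℝ) (hb : 0 < b) (hba : b < a) :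
    (fun N : ℕ => ∑ i ∈ Finset.Icc 1 N, (i : ℝ) ^ a * c i) =O[atTop]
      (fun N : ℕ => (N : ℝ) ^ b) ↔
    (Summable c ∧
      (fun N : ℕ => ∑' i : ℕ, c (N + 1 + i)) =O[atTop] (fun N : ℕ => (N : ℝ) ^ (b - a))) :=
  ⟨duren_fwd c hc a b hb hba, fun h => duren_bwd c hc a b hb hba h.1 h.2⟩
end

section
/- Let $\nu \in \mathbb{R}$, let $c_k \geq 0$, and let $0 < b < a$. Then $\sum_{k=1}^{N} k^a c_k = \mathcal{O}(N^b (\log N)^{\nu})$ as $N \to \infty$ if and only if $\sum_{k=N}^{\infty} c_k = \mathcal{O}(N^{b-a} (\log N)^{\nu})$ as $N \to \infty$. -/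
open Filter Asymptotics

section DurenHelpers

open Real Finset
variable {x p q : ℝ}

lemma one_sub_rpow_le {q t : ℝ} (hq : 0 < q) (ht : 0 ≤ t) (ht1 : t ≤ 1) :
    1 - t ^ q ≤ (q + 1) * (1 - t) := by
  rcases le_or_gt q 1 with h | h
  · rcases eq_or_lt_of_le ht with rfl | htpos
    · simpa using by nlinarith [Real.zero_rpow (ne_of_gt hq)]
    · have : t ^ (1:ℝ) ≤ t ^ q := Real.rpow_le_rpow_of_exponent_ge htpos ht1 h
      rw [Real.rpow_one] at this
      nlinarith
  · have := one_add_mul_self_le_rpow_one_add (s := t - 1) (by linarith) (le_of_lt h)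
    simp only [add_sub_cancel] at this
    nlinarith

lemma min_mul_le_one_sub_rpow {q t : ℝ} (hq : 0 < q) (ht : 0 ≤ t) (ht1 : t ≤ 1) :
    min 1 q * (1 - t) ≤ 1 - t ^ q := by
  rcases le_or_gt q 1 with h | h
  · have := rpow_one_add_le_one_add_mul_self (s := t - 1) (by linarith) (le_of_lt hq) h
    simp only [add_sub_cancel] at this
    have hm : min 1 q = q := min_eq_right h
    rw [hm]; nlinarith
  · rcases eq_or_lt_of_le ht with rfl | htpos
    · simp [Real.zero_rpow (ne_of_gt hq), min_le_iff]
    · have : t ^ q ≤ t ^ (1:ℝ) := Real.rpow_le_rpow_of_exponent_ge htpos ht1 (le_of_lt h)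
      rw [Real.rpow_one] at this
      have hm : min 1 q = 1 := min_eq_left (le_of_lt h)
      rw [hm]; nlinarith

lemma key_neg (hx0 : (0:ℝ) < x) (hx1 : (0:ℝ) < x + 1) :
    x ^ (-p) * (x / (x + 1)) ^ p = (x + 1) ^ (-p) := by
  rw [Real.div_rpow hx0.le hx1.le, Real.rpow_neg hx0.le, Real.rpow_neg hx1.le]
  have hxp : x ^ p ≠ 0 := (Real.rpow_pos_of_pos hx0 p).ne'
  field_simp

lemma rpow_neg_sub_le (hx : 1 ≤ x) (hp : 0 < p) :
    x ^ (-p) - (x + 1) ^ (-p) ≤ (p + 1) * x ^ (-p - 1) := by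
  have hx0 : (0:ℝ) < x := by linarith
  have hx1 : (0:ℝ) < x + 1 := by linarith
  set t := x / (x + 1) with htdef
  have ht0 : 0 ≤ t := by positivity
  have ht1 : t ≤ 1 := by rw [div_le_one hx1]; linarith
  have hb := one_sub_rpow_le hp ht0 ht1
  have h1t : 1 - t = 1 / (x + 1) := by rw [htdef]; field_simp; ring
  have hsplit : x ^ (-p - 1) = x ^ (-p) * x⁻¹ := by
    rw [show -p - 1 = -p + (-1) by ring, Real.rpow_add hx0, Real.rpow_neg_one]
  have hxp : (0:ℝ) < x ^ (-p) := Real.rpow_pos_of_pos hx0 _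
  calc x ^ (-p) - (x + 1) ^ (-p) = x ^ (-p) * (1 - t ^ p) := by
        rw [← key_neg hx0 hx1]; ring
    _ ≤ x ^ (-p) * ((p + 1) * (1 - t)) := mul_le_mul_of_nonneg_left hb hxp.le
    _ = (p + 1) * (x ^ (-p) * (1 / (x + 1))) := by rw [h1t]; ring
    _ ≤ (p + 1) * (x ^ (-p) * x⁻¹) := by
        apply mul_le_mul_of_nonneg_left _ (by linarith)
        apply mul_le_mul_of_nonneg_left _ hxp.le
        rw [one_div]
        exact inv_anti₀ hx0 (by linarith)
    _ = (p + 1) * x ^ (-p - 1) := by rw [hsplit]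

lemma min_mul_le_rpow_neg_sub (hx : 1 ≤ x) (hp : 0 < p) :
    min 1 p / 2 * x ^ (-p - 1) ≤ x ^ (-p) - (x + 1) ^ (-p) := by
  have hx0 : (0:ℝ) < x := by linarith
  have hx1 : (0:ℝ) < x + 1 := by linarith
  set t := x / (x + 1) with htdef
  have ht0 : 0 ≤ t := by positivity
  have ht1 : t ≤ 1 := by rw [div_le_one hx1]; linarith
  have hb := min_mul_le_one_sub_rpow hp ht0 ht1
  have h1t : 1 - t = 1 / (x + 1) := by rw [htdef]; field_simp; ring
  have hsplit : x ^ (-p - 1) = x ^ (-p) * x⁻¹ := by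
    rw [show -p - 1 = -p + (-1) by ring, Real.rpow_add hx0, Real.rpow_neg_one]
  have hxp : (0:ℝ) < x ^ (-p) := Real.rpow_pos_of_pos hx0 _
  have hm : (0:ℝ) < min 1 p := lt_min one_pos hp
  calc min 1 p / 2 * x ^ (-p - 1) = min 1 p * (x ^ (-p) * (x⁻¹ / 2)) := by
        rw [hsplit]; ring
    _ ≤ min 1 p * (x ^ (-p) * (1 / (x + 1))) := by
        apply mul_le_mul_of_nonneg_left _ hm.le
        apply mul_le_mul_of_nonneg_left _ hxp.le
        rw [div_le_div_iff₀ (by norm_num) hx1, inv_mul_eq_div, div_le_iff₀ hx0]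
        nlinarith
    _ = x ^ (-p) * (min 1 p * (1 - t)) := by rw [h1t]; ring
    _ ≤ x ^ (-p) * (1 - t ^ p) := mul_le_mul_of_nonneg_left hb hxp.le
    _ = x ^ (-p) - (x + 1) ^ (-p) := by rw [← key_neg hx0 hx1]; ring

lemma key_pos (hx0 : (0:ℝ) < x) (hx1 : (0:ℝ) ≤ x - 1) :
    x ^ q * ((x - 1) / x) ^ q = (x - 1) ^ q := by
  rw [Real.div_rpow hx1 hx0.le]
  have hxp : x ^ q ≠ 0 := (Real.rpow_pos_of_pos hx0 q).ne'
  field_simp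

lemma rpow_sub_sub_le (hx : 1 ≤ x) (hq : 0 < q) :
    x ^ q - (x - 1) ^ q ≤ (q + 1) * x ^ (q - 1) := by
  have hx0 : (0:ℝ) < x := by linarith
  have hx1 : (0:ℝ) ≤ x - 1 := by linarith
  set t := (x - 1) / x with htdef
  have ht0 : 0 ≤ t := by positivity
  have ht1 : t ≤ 1 := by rw [div_le_one hx0]; linarith
  have hb := one_sub_rpow_le hq ht0 ht1
  have h1t : 1 - t = 1 / x := by rw [htdef]; field_simp; ring
  have hsplit : x ^ (q - 1) = x ^ q * x⁻¹ := by
    rw [show q - 1 = q + (-1) by ring, Real.rpow_add hx0, Real.rpow_neg_one]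
  have hxq : (0:ℝ) < x ^ q := Real.rpow_pos_of_pos hx0 _
  calc x ^ q - (x - 1) ^ q = x ^ q * (1 - t ^ q) := by rw [← key_pos hx0 hx1]; ring
    _ ≤ x ^ q * ((q + 1) * (1 - t)) := mul_le_mul_of_nonneg_left hb hxq.le
    _ = (q + 1) * x ^ (q - 1) := by rw [h1t, hsplit]; ring

lemma min_mul_le_rpow_sub_sub (hx : 1 ≤ x) (hq : 0 < q) :
    min 1 q * x ^ (q - 1) ≤ x ^ q - (x - 1) ^ q := by
  have hx0 : (0:ℝ) < x := by linarith
  have hx1 : (0:ℝ) ≤ x - 1 := by linarith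
  set t := (x - 1) / x with htdef
  have ht0 : 0 ≤ t := by positivity
  have ht1 : t ≤ 1 := by rw [div_le_one hx0]; linarith
  have hb := min_mul_le_one_sub_rpow hq ht0 ht1
  have h1t : 1 - t = 1 / x := by rw [htdef]; field_simp; ring
  have hsplit : x ^ (q - 1) = x ^ q * x⁻¹ := by
    rw [show q - 1 = q + (-1) by ring, Real.rpow_add hx0, Real.rpow_neg_one]
  have hxq : (0:ℝ) < x ^ q := Real.rpow_pos_of_pos hx0 _
  calc min 1 q * x ^ (q - 1) = x ^ q * (min 1 q * (1 - t)) := by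
        rw [h1t, hsplit]; ring
    _ ≤ x ^ q * (1 - t ^ q) := mul_le_mul_of_nonneg_left hb hxq.le
    _ = x ^ q - (x - 1) ^ q := by rw [← key_pos hx0 hx1]; ring


lemma telescope_Icc (g : ℕ → ℝ) {N M : ℕ} (h : N ≤ M) :
    ∑ k ∈ Icc N M, (g k - g (k + 1)) = g N - g (M + 1) := by
  induction M, h using Nat.le_induction with
  | base => simp
  | succ M hNM ih =>
      rw [Finset.sum_Icc_succ_top (by omega), ih]; ring

lemma telescope_Icc_one (g : ℕ → ℝ) (N : ℕ) :
    ∑ k ∈ Icc 1 N, (g k - g (k - 1)) = g N - g 0 := by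
  induction N with
  | zero => simp
  | succ N ih =>
      rw [Finset.sum_Icc_succ_top (by omega), ih]
      simp only [Nat.add_sub_cancel]; ring

lemma sum_Icc_rpow_neg_le {s : ℝ} (hs : 1 < s) (N M : ℕ) (hN : 1 ≤ N) :
    ∑ k ∈ Icc N M, (k : ℝ) ^ (-s) ≤ (2 / min 1 (s - 1)) * (N : ℝ) ^ (1 - s) := by
  set p := s - 1 with hpdef
  have hp : 0 < p := by simp [hpdef]; linarith
  have hm : (0:ℝ) < min 1 p := lt_min one_pos hp
  rcases le_or_gt N M with h | h
  · have hpt : ∀ k ∈ Icc N M, (k : ℝ) ^ (-s) ≤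
        (2 / min 1 p) * ((k:ℝ) ^ (-p) - ((k:ℝ) + 1) ^ (-p)) := by
      intro k hk
      simp only [mem_Icc] at hk
      have hk1 : (1:ℝ) ≤ (k:ℝ) := by exact_mod_cast le_trans hN hk.1
      have := min_mul_le_rpow_neg_sub hk1 hp
      have hss : -p - 1 = -s := by rw [hpdef]; ring
      rw [hss] at this
      rw [div_mul_eq_mul_div, le_div_iff₀ hm]
      nlinarith [this]
    calc ∑ k ∈ Icc N M, (k : ℝ) ^ (-s)
        ≤ ∑ k ∈ Icc N M, (2 / min 1 p) * ((k:ℝ) ^ (-p) - ((k:ℝ) + 1) ^ (-p)) :=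
          Finset.sum_le_sum hpt
      _ = (2 / min 1 p) * ∑ k ∈ Icc N M, (((k:ℕ):ℝ) ^ (-p) - (((k+1:ℕ)):ℝ) ^ (-p)) := by
          rw [Finset.mul_sum]; congr 1; ext k; push_cast; ring
      _ = (2 / min 1 p) * ((N:ℝ) ^ (-p) - ((M+1:ℕ):ℝ) ^ (-p)) := by
          rw [telescope_Icc (fun k => ((k:ℕ):ℝ) ^ (-p)) h]
      _ ≤ (2 / min 1 p) * (N:ℝ) ^ (1 - s) := by
          have h1 : (1:ℝ) - s = -p := by rw [hpdef]; ring
          rw [h1]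
          have : (0:ℝ) ≤ ((M+1:ℕ):ℝ) ^ (-p) :=
            Real.rpow_nonneg (by positivity) _
          have h2 : (0:ℝ) < 2 / min 1 p := by positivity
          nlinarith
  · rw [Finset.Icc_eq_empty (by omega)]
    simp only [Finset.sum_empty]
    positivity

lemma sum_Icc_rpow_le {t : ℝ} (ht : -1 < t) (N : ℕ) :
    ∑ k ∈ Icc 1 N, (k : ℝ) ^ t ≤ (1 / min 1 (t + 1)) * (N : ℝ) ^ (t + 1) := by
  set q := t + 1 with hqdef
  have hq : 0 < q := by simp [hqdef]; linarith
  have hm : (0:ℝ) < min 1 q := lt_min one_pos hq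
  have hpt : ∀ k ∈ Icc 1 N, (k : ℝ) ^ t ≤
      (1 / min 1 q) * (((k:ℕ):ℝ) ^ q - ((k - 1 : ℕ):ℝ) ^ q) := by
    intro k hk
    simp only [mem_Icc] at hk
    have hk1 : (1:ℝ) ≤ (k:ℝ) := by exact_mod_cast hk.1
    have hcast : ((k - 1 : ℕ):ℝ) = (k:ℝ) - 1 := by
      have : 1 ≤ k := hk.1
      push_cast [this]; ring
    have := min_mul_le_rpow_sub_sub hk1 hq
    have hqt : q - 1 = t := by rw [hqdef]; ring
    rw [hqt] at this
    rw [hcast]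
    rw [div_mul_eq_mul_div, le_div_iff₀ hm]
    nlinarith [this]
  calc ∑ k ∈ Icc 1 N, (k : ℝ) ^ t
      ≤ ∑ k ∈ Icc 1 N, (1 / min 1 q) * (((k:ℕ):ℝ) ^ q - ((k - 1 : ℕ):ℝ) ^ q) :=
        Finset.sum_le_sum hpt
    _ = (1 / min 1 q) * (((N:ℕ):ℝ) ^ q - ((0:ℕ):ℝ) ^ q) := by
        rw [← Finset.mul_sum, telescope_Icc_one (fun k => ((k:ℕ):ℝ) ^ q)]
    _ = (1 / min 1 q) * (N : ℝ) ^ (t + 1) := by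
        norm_num [Real.zero_rpow hq.ne', hqdef, Real.zero_rpow (show t + 1 ≠ 0 by linarith)]

lemma one_le_log_of_three_le {x : ℝ} (hx : 3 ≤ x) : 1 ≤ Real.log x := by
  have hx0 : (0:ℝ) < x := by linarith
  rw [Real.le_log_iff_exp_le hx0]
  have := Real.exp_one_lt_d9
  linarith

lemma log_ratio {δ x y : ℝ} (hδ : 0 < δ) (hx : 3 ≤ x) (hxy : x ≤ y) :
    Real.log y ≤ (1 + 1/δ) * (y/x) ^ δ * Real.log x := by
  have hx0 : (0:ℝ) < x := by linarith
  have hy0 : (0:ℝ) < y := by linarith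
  have hlx : 1 ≤ Real.log x := one_le_log_of_three_le hx
  have hr1 : (1:ℝ) ≤ y / x := (one_le_div hx0).mpr hxy
  have hA1 : (1:ℝ) ≤ (y/x) ^ δ := by
    calc (1:ℝ) = (y/x) ^ (0:ℝ) := (Real.rpow_zero _).symm
    _ ≤ (y/x) ^ δ := Real.rpow_le_rpow_of_exponent_le hr1 hδ.le
  have hsplit : Real.log y = Real.log x + Real.log (y/x) := by
    rw [Real.log_div hy0.ne' hx0.ne']; ring
  have hlog : Real.log (y/x) ≤ (y/x) ^ δ / δ :=
    Real.log_le_rpow_div (by positivity) hδ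
  rw [hsplit]
  have h1 : Real.log x ≤ (y/x) ^ δ * Real.log x :=
    le_mul_of_one_le_left (by linarith) hA1
  have h2 : (y/x) ^ δ / δ ≤ (y/x) ^ δ / δ * Real.log x :=
    le_mul_of_one_le_right (by positivity) hlx
  calc Real.log x + Real.log (y/x) ≤ (y/x) ^ δ * Real.log x + (y/x) ^ δ / δ * Real.log x := by
        have := hlog.trans h2
        linarith
    _ = (1 + 1/δ) * (y/x) ^ δ * Real.log x := by ring

lemma log_rpow_tail (ν : ℝ) {ε : ℝ} (hε : 0 < ε) :
    ∃ C : ℝ, 1 ≤ C ∧ ∀ x y : ℝ, 3 ≤ x → x ≤ y →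
      Real.log y ^ ν ≤ C * (y/x) ^ ε * Real.log x ^ ν := by
  rcases lt_trichotomy ν 0 with hν | hν | hν
  · refine ⟨1, le_refl _, fun x y hx hxy => ?_⟩
    have hx0 : (0:ℝ) < x := by linarith
    have hlx : 1 ≤ Real.log x := one_le_log_of_three_le hx
    have hly : Real.log x ≤ Real.log y :=
      Real.log_le_log (by linarith) hxy
    have h1 : Real.log y ^ ν ≤ Real.log x ^ ν :=
      Real.rpow_le_rpow_of_nonpos (by linarith) hly hν.le
    have hr1 : (1:ℝ) ≤ (y/x) ^ ε := by
      calc (1:ℝ) = (y/x) ^ (0:ℝ) := (Real.rpow_zero _).symm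
      _ ≤ (y/x) ^ ε := Real.rpow_le_rpow_of_exponent_le ((one_le_div hx0).mpr hxy) hε.le
    have hxν : 0 ≤ Real.log x ^ ν := Real.rpow_nonneg (by linarith) _
    calc Real.log y ^ ν ≤ Real.log x ^ ν := h1
      _ ≤ 1 * (y/x) ^ ε * Real.log x ^ ν := by nlinarith
  · subst hν
    refine ⟨1, le_refl _, fun x y hx hxy => ?_⟩
    have hx0 : (0:ℝ) < x := by linarith
    have hr1 : (1:ℝ) ≤ (y/x) ^ ε := by
      calc (1:ℝ) = (y/x) ^ (0:ℝ) := (Real.rpow_zero _).symm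
      _ ≤ (y/x) ^ ε := Real.rpow_le_rpow_of_exponent_le ((one_le_div hx0).mpr hxy) hε.le
    simpa using hr1
  · set δ := ε / ν with hδdef
    have hδ : 0 < δ := by positivity
    refine ⟨(1 + 1/δ) ^ ν, ?_, fun x y hx hxy => ?_⟩
    · calc (1:ℝ) = (1:ℝ) ^ ν := (Real.one_rpow _).symm
      _ ≤ (1 + 1/δ) ^ ν := Real.rpow_le_rpow (by norm_num) (by nlinarith [one_div_pos.mpr hδ]) hν.le
    · have hx0 : (0:ℝ) < x := by linarith
      have hlx : 1 ≤ Real.log x := one_le_log_of_three_le hx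
      have hly : 0 ≤ Real.log y := by
        have := Real.log_le_log (by linarith) hxy; linarith
      have key := log_ratio hδ hx hxy
      have h1 : Real.log y ^ ν ≤ ((1 + 1/δ) * (y/x) ^ δ * Real.log x) ^ ν :=
        Real.rpow_le_rpow hly key hν.le
      have hd0 : (0:ℝ) ≤ 1 + 1/δ := by
        have := one_div_pos.mpr hδ; linarith
      have hyx0 : (0:ℝ) ≤ y/x := div_nonneg (by linarith) (by linarith)
      have hr0 : (0:ℝ) ≤ (y/x) ^ δ := Real.rpow_nonneg hyx0 _
      rw [Real.mul_rpow (mul_nonneg hd0 hr0) (by linarith), Real.mul_rpow hd0 hr0,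
        ← Real.rpow_mul hyx0] at h1
      have hδν : δ * ν = ε := by
        rw [hδdef]; field_simp
      rwa [hδν] at h1

lemma log_rpow_head (ν : ℝ) {ε : ℝ} (hε : 0 < ε) :
    ∃ C : ℝ, 1 ≤ C ∧ ∀ x y : ℝ, 3 ≤ x → x ≤ y →
      Real.log x ^ ν ≤ C * (y/x) ^ ε * Real.log y ^ ν := by
  rcases le_or_gt 0 ν with hν | hν
  · refine ⟨1, le_refl _, fun x y hx hxy => ?_⟩
    have hx0 : (0:ℝ) < x := by linarith
    have hlx : 1 ≤ Real.log x := one_le_log_of_three_le hx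
    have hly : Real.log x ≤ Real.log y := Real.log_le_log (by linarith) hxy
    have h1 : Real.log x ^ ν ≤ Real.log y ^ ν :=
      Real.rpow_le_rpow (by linarith) hly hν
    have hr1 : (1:ℝ) ≤ (y/x) ^ ε := by
      calc (1:ℝ) = (y/x) ^ (0:ℝ) := (Real.rpow_zero _).symm
      _ ≤ (y/x) ^ ε := Real.rpow_le_rpow_of_exponent_le ((one_le_div hx0).mpr hxy) hε.le
    have hyν : 0 ≤ Real.log y ^ ν := Real.rpow_nonneg (by linarith) _
    calc Real.log x ^ ν ≤ Real.log y ^ ν := h1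
      _ ≤ 1 * (y/x) ^ ε * Real.log y ^ ν := by nlinarith
  · set μ := -ν with hμdef
    have hμ : 0 < μ := by simp [hμdef]; linarith
    set δ := ε / μ with hδdef
    have hδ : 0 < δ := by positivity
    refine ⟨(1 + 1/δ) ^ μ, ?_, fun x y hx hxy => ?_⟩
    · calc (1:ℝ) = (1:ℝ) ^ μ := (Real.one_rpow _).symm
      _ ≤ (1 + 1/δ) ^ μ := Real.rpow_le_rpow (by norm_num)
          (by nlinarith [one_div_pos.mpr hδ]) hμ.le
    · have hx0 : (0:ℝ) < x := by linarith
      have hlx : 1 ≤ Real.log x := one_le_log_of_three_le hx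
      have hly : 1 ≤ Real.log y := one_le_log_of_three_le (by linarith)
      have key := log_ratio hδ hx hxy
      have hd0 : (0:ℝ) ≤ 1 + 1/δ := by
        have := one_div_pos.mpr hδ; linarith
      have hyx0 : (0:ℝ) ≤ y/x := div_nonneg (by linarith) (by linarith)
      have hr0 : (0:ℝ) ≤ (y/x) ^ δ := Real.rpow_nonneg hyx0 _
      -- (log y)^μ ≤ A^μ (log x)^μ with A = (1+1/δ)(y/x)^δ
      have h1 : Real.log y ^ μ ≤ ((1 + 1/δ) * (y/x) ^ δ * Real.log x) ^ μ :=
        Real.rpow_le_rpow (by linarith) key hμ.le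
      rw [Real.mul_rpow (mul_nonneg hd0 hr0) (by linarith), Real.mul_rpow hd0 hr0,
        ← Real.rpow_mul hyx0] at h1
      have hδμ : δ * μ = ε := by rw [hδdef]; field_simp
      rw [hδμ] at h1
      have hνμ : ν = -μ := by rw [hμdef]; ring
      have hlyμ : (0:ℝ) < Real.log y ^ μ := Real.rpow_pos_of_pos (by linarith) _
      have hlxμ : (0:ℝ) < Real.log x ^ μ := Real.rpow_pos_of_pos (by linarith) _
      have hCpos : (0:ℝ) < (1 + 1/δ) ^ μ * (y/x) ^ ε := by
        have h1' : (0:ℝ) < (1 + 1/δ) ^ μ :=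
          Real.rpow_pos_of_pos (by nlinarith [one_div_pos.mpr hδ]) _
        have h2' : (0:ℝ) < (y/x) ^ ε := Real.rpow_pos_of_pos (by
          apply div_pos <;> linarith) _
        positivity
      rw [hνμ, Real.rpow_neg (by linarith : (0:ℝ) ≤ Real.log x),
        Real.rpow_neg (by linarith : (0:ℝ) ≤ Real.log y),
        inv_eq_one_div, inv_eq_one_div, mul_one_div,
        div_le_div_iff₀ hlxμ hlyμ, one_mul]
      calc Real.log y ^ μ ≤ (1 + 1/δ) ^ μ * (y/x) ^ ε * Real.log x ^ μ := h1
        _ = (1 + 1/δ) ^ μ * (y/x) ^ ε * Real.log x ^ μ := rfl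

lemma one_le_rpow_mul_log_eventually {b : ℝ} (ν : ℝ) (hb : 0 < b) :
    ∀ᶠ N : ℕ in atTop, 1 ≤ (N : ℝ) ^ b * Real.log N ^ ν := by
  rcases le_or_gt 0 ν with hν | hν
  · filter_upwards [eventually_ge_atTop 3] with N hN
    have hN3 : (3:ℝ) ≤ (N:ℝ) := by exact_mod_cast hN
    have h1 : (1:ℝ) ≤ (N:ℝ) ^ b := by
      calc (1:ℝ) = (N:ℝ) ^ (0:ℝ) := (Real.rpow_zero _).symm
      _ ≤ (N:ℝ) ^ b := Real.rpow_le_rpow_of_exponent_le (by linarith) hb.le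
    have h2 : (1:ℝ) ≤ Real.log N ^ ν := by
      calc (1:ℝ) = Real.log N ^ (0:ℝ) := (Real.rpow_zero _).symm
      _ ≤ Real.log N ^ ν := Real.rpow_le_rpow_of_exponent_le (one_le_log_of_three_le hN3) hν
    nlinarith
  · set μ := -ν with hμdef
    have hμ : 0 < μ := by simp [hμdef]; linarith
    set δ := b / (2 * μ) with hδdef
    have hδ : 0 < δ := by positivity
    set D := (1/δ) ^ μ with hDdef
    have hD : 0 < D := Real.rpow_pos_of_pos (by positivity) _
    have htend : Tendsto (fun N : ℕ => (N : ℝ) ^ (b/2)) atTop atTop :=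
      (tendsto_rpow_atTop (by linarith)).comp tendsto_natCast_atTop_atTop
    filter_upwards [eventually_ge_atTop 3, htend.eventually_ge_atTop D] with N hN hND
    have hN3 : (3:ℝ) ≤ (N:ℝ) := by exact_mod_cast hN
    have hN0 : (0:ℝ) < (N:ℝ) := by linarith
    have hlog1 : 1 ≤ Real.log N := one_le_log_of_three_le hN3
    -- (log N)^μ ≤ N^(b/2) * D
    have hlogle : Real.log N ≤ (N:ℝ) ^ δ / δ := Real.log_le_rpow_div hN0.le hδ
    have h1 : Real.log N ^ μ ≤ ((N:ℝ) ^ δ / δ) ^ μ :=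
      Real.rpow_le_rpow (by linarith) hlogle hμ.le
    have h2 : ((N:ℝ) ^ δ / δ) ^ μ = (N:ℝ) ^ (b/2) * D := by
      rw [div_eq_mul_one_div, Real.mul_rpow (Real.rpow_nonneg hN0.le _) (by positivity),
        ← Real.rpow_mul hN0.le, hDdef]
      have hδμ : δ * μ = b / 2 := by
        rw [hδdef]; field_simp
      rw [hδμ]
    rw [h2] at h1
    -- conclude
    have hlogμ : (0:ℝ) < Real.log N ^ μ := Real.rpow_pos_of_pos (by linarith) _
    have hNb2 : (0:ℝ) < (N:ℝ) ^ (b/2) := Real.rpow_pos_of_pos hN0 _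
    have hinv : ((N:ℝ) ^ (b/2) * D)⁻¹ ≤ Real.log N ^ ν := by
      rw [show ν = -μ by rw [hμdef]; ring, Real.rpow_neg (by linarith)]
      exact inv_anti₀ hlogμ h1
    have hsplit : (N:ℝ) ^ b = (N:ℝ) ^ (b/2) * (N:ℝ) ^ (b/2) := by
      rw [← Real.rpow_add hN0]; norm_num
    calc (1:ℝ) = (N:ℝ) ^ (b/2) * D * ((N:ℝ) ^ (b/2) * D)⁻¹ := by
          field_simp
      _ ≤ (N:ℝ) ^ (b/2) * (N:ℝ) ^ (b/2) * ((N:ℝ) ^ (b/2) * D)⁻¹ := by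
          apply mul_le_mul_of_nonneg_right _ (by positivity)
          exact mul_le_mul_of_nonneg_left hND hNb2.le
      _ = (N:ℝ) ^ b * ((N:ℝ) ^ (b/2) * D)⁻¹ := by rw [hsplit]
      _ ≤ (N:ℝ) ^ b * Real.log N ^ ν := by
          apply mul_le_mul_of_nonneg_left hinv (by positivity)

lemma abel_tail (f d : ℕ → ℝ) (hd : ∀ k, 0 ≤ d k) (hf : ∀ k, 0 ≤ f k)
    {N : ℕ} (hN : 1 ≤ N) : ∀ M, N ≤ M →
    ∑ k ∈ Icc N M, f k * d k ≤
      ∑ k ∈ Icc N M, (f k - f (k + 1)) * (∑ j ∈ Icc 1 k, d j)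
        + f (M + 1) * (∑ j ∈ Icc 1 M, d j) := by
  intro M hM
  induction M, hM using Nat.le_induction with
  | base =>
      simp only [Icc_self, sum_singleton]
      have h1 : d N ≤ ∑ j ∈ Icc 1 N, d j :=
        Finset.single_le_sum (fun j _ => hd j) (by simp [mem_Icc]; omega)
      have h2 : f N * d N ≤ f N * ∑ j ∈ Icc 1 N, d j :=
        mul_le_mul_of_nonneg_left h1 (hf N)
      nlinarith [h2]
  | succ M hNM ih =>
      have hsplit : ∀ g : ℕ → ℝ, ∑ k ∈ Icc N (M+1), g k = ∑ k ∈ Icc N M, g k + g (M+1) :=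
        fun g => Finset.sum_Icc_succ_top (by omega) g
      have hS : ∑ j ∈ Icc 1 (M+1), d j = ∑ j ∈ Icc 1 M, d j + d (M+1) :=
        Finset.sum_Icc_succ_top (by omega) d
      rw [hsplit (fun k => f k * d k), hsplit (fun k => (f k - f (k+1)) * (∑ j ∈ Icc 1 k, d j)), hS]
      have e : (f (M+1) - f (M+1+1)) * (∑ j ∈ Icc 1 M, d j + d (M+1))
          + f (M+1+1) * (∑ j ∈ Icc 1 M, d j + d (M+1))
          = f (M+1) * (∑ j ∈ Icc 1 M, d j) + f (M+1) * d (M+1) := by ring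
      linarith [ih]

lemma abel_head (g T : ℕ → ℝ) (hg0 : g 0 = 0) : ∀ N : ℕ,
    ∑ k ∈ Icc 1 N, g k * (T k - T (k + 1)) =
      ∑ k ∈ Icc 1 N, (g k - g (k - 1)) * T k - g N * T (N + 1) := by
  intro N
  induction N with
  | zero => simp [hg0]
  | succ N ih =>
      rw [Finset.sum_Icc_succ_top (by omega), Finset.sum_Icc_succ_top (by omega), ih]
      simp only [Nat.add_sub_cancel]
      ring

lemma forward_tail_bound (ν a b : ℝ) (hb : 0 < b) (hba : b < a)
    (c : ℕ → ℝ) (hc : ∀ k, 0 ≤ c k) (C : ℝ) (hC : 0 ≤ C) (N₀ : ℕ)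
    (hS : ∀ k : ℕ, N₀ ≤ k → ∑ j ∈ Icc 1 k, (j:ℝ)^a * c j ≤ C * ((k:ℝ)^b * Real.log k ^ ν)) :
    ∃ K : ℝ, 0 ≤ K ∧ ∀ N : ℕ, max N₀ 3 ≤ N → ∀ M : ℕ,
      ∑ k ∈ Icc N M, c k ≤ K * ((N:ℝ)^(b-a) * Real.log N ^ ν) := by
  set ε := (a - b) / 2 with hεdef
  have hε : 0 < ε := by rw [hεdef]; linarith
  obtain ⟨C₃, hC₃1, hC₃⟩ := log_rpow_tail ν hε
  have hC₃0 : 0 ≤ C₃ := by linarith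
  set s := 1 + ε with hsdef
  have hs1 : 1 < s := by rw [hsdef]; linarith
  have hsε : s - 1 = ε := by rw [hsdef]; ring
  set K := (a + 1) * C * C₃ * (2 / min 1 ε) + C * C₃ with hKdef
  have hmin : (0:ℝ) < min 1 ε := lt_min one_pos hε
  have hK0 : 0 ≤ K := by
    have h1 : (0:ℝ) ≤ 2 / min 1 ε := by positivity
    have : (0:ℝ) < a + 1 := by linarith
    rw [hKdef]; positivity
  refine ⟨K, hK0, fun N hN M => ?_⟩
  have hN3 : 3 ≤ N := le_trans (le_max_right _ _) hN
  have hN0' : N₀ ≤ N := le_trans (le_max_left _ _) hN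
  have hN3R : (3:ℝ) ≤ (N:ℝ) := by exact_mod_cast hN3
  have hN0 : (0:ℝ) < (N:ℝ) := by linarith
  have hLN : 1 ≤ Real.log N := one_le_log_of_three_le hN3R
  have hLN0 : 0 ≤ Real.log (N:ℝ) ^ ν := Real.rpow_nonneg (by linarith) _
  have hW0 : 0 ≤ (N:ℝ)^(b-a) * Real.log N ^ ν := by
    have := Real.rpow_nonneg hN0.le (b - a); positivity
  rcases lt_or_ge M N with h | hMN
  · rw [Finset.Icc_eq_empty (by omega)]
    simp only [Finset.sum_empty]
    positivity
  -- main case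
  set f : ℕ → ℝ := fun k => (k:ℝ) ^ (-a) with hfdef
  set d : ℕ → ℝ := fun k => (k:ℝ) ^ a * c k with hddef
  set S : ℕ → ℝ := fun k => ∑ j ∈ Icc 1 k, d j with hSdef
  have hd0 : ∀ k, 0 ≤ d k := fun k => mul_nonneg (Real.rpow_nonneg (Nat.cast_nonneg k) _) (hc k)
  have hf0 : ∀ k, 0 ≤ f k := fun k => Real.rpow_nonneg (Nat.cast_nonneg k) _
  have hS0 : ∀ k, 0 ≤ S k := fun k => Finset.sum_nonneg fun j _ => hd0 j
  have hSb : ∀ k : ℕ, N₀ ≤ k → S k ≤ C * ((k:ℝ)^b * Real.log k ^ ν) := hS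
  have hstep0 : ∑ k ∈ Icc N M, c k = ∑ k ∈ Icc N M, f k * d k := by
    apply Finset.sum_congr rfl
    intro k hk
    simp only [mem_Icc] at hk
    have hk0 : (0:ℝ) < (k:ℝ) := by
      have : 3 ≤ k := le_trans hN3 hk.1
      exact_mod_cast by omega
    rw [hfdef, hddef]
    simp only
    rw [← mul_assoc, ← Real.rpow_add hk0]
    norm_num
  have hN1 : 1 ≤ N := by omega
  have habel := abel_tail f d hd0 hf0 hN1 M hMN
  -- termwise bound
  set D := (a + 1) * C * C₃ * (N:ℝ)^(-ε) * Real.log (N:ℝ) ^ ν with hDdef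
  have hD0 : 0 ≤ D := by
    have := Real.rpow_nonneg hN0.le (-ε)
    rw [hDdef]
    have : (0:ℝ) < a + 1 := by linarith
    positivity
  have hkey : ∀ k ∈ Icc N M, (f k - f (k + 1)) * S k ≤ D * (k:ℝ)^(-s) := by
    intro k hk
    simp only [mem_Icc] at hk
    have hkN : N ≤ k := hk.1
    have hk3 : (3:ℝ) ≤ (k:ℝ) := le_trans hN3R (by exact_mod_cast hkN)
    have hk1 : (1:ℝ) ≤ (k:ℝ) := by linarith
    have hk0 : (0:ℝ) < (k:ℝ) := by linarith
    have hcast : f (k+1) = ((k:ℝ) + 1) ^ (-a) := by rw [hfdef]; push_cast; ring_nf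
    have hLk0 : 0 ≤ Real.log (k:ℝ) ^ ν := Real.rpow_nonneg (by
      have := one_le_log_of_three_le hk3; linarith) _
    have e1 : f k - f (k + 1) ≤ (a + 1) * (k:ℝ)^(-a-1) := by
      rw [hcast]; exact rpow_neg_sub_le hk1 (by linarith)
    have e1' : 0 ≤ f k - f (k + 1) := by
      rw [hcast]
      have := Real.rpow_le_rpow_of_nonpos hk0 (by linarith : (k:ℝ) ≤ (k:ℝ)+1) (by linarith : -a ≤ 0)
      rw [hfdef]; simp only; linarith
    have e2 : S k ≤ C * ((k:ℝ)^b * Real.log k ^ ν) := hSb k (le_trans hN0' hkN)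
    have e3 : Real.log (k:ℝ) ^ ν ≤ C₃ * ((k:ℝ)/(N:ℝ)) ^ ε * Real.log (N:ℝ) ^ ν :=
      hC₃ (N:ℝ) (k:ℝ) hN3R (by exact_mod_cast hkN)
    have hkb : (0:ℝ) ≤ (k:ℝ)^b := Real.rpow_nonneg hk0.le _
    have hka : (0:ℝ) ≤ (a+1) * (k:ℝ)^(-a-1) := by
      have := Real.rpow_nonneg hk0.le (-a-1)
      have : (0:ℝ) < a + 1 := by linarith
      positivity
    have m1 : ((k:ℝ)/(N:ℝ))^ε = (k:ℝ)^ε * (N:ℝ)^(-ε) := by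
      rw [Real.div_rpow hk0.le hN0.le, Real.rpow_neg hN0.le, div_eq_mul_inv]
    have m2 : (k:ℝ)^(-a-1) * ((k:ℝ)^b * (k:ℝ)^ε) = (k:ℝ)^(-s) := by
      rw [← Real.rpow_add hk0, ← Real.rpow_add hk0]
      congr 1
      rw [hsdef, hεdef]; ring
    calc (f k - f (k + 1)) * S k
        ≤ ((a + 1) * (k:ℝ)^(-a-1)) * (C * ((k:ℝ)^b * Real.log k ^ ν)) := by
          apply mul_le_mul e1 e2 (hS0 k) hka
      _ ≤ ((a + 1) * (k:ℝ)^(-a-1)) * (C * ((k:ℝ)^b * (C₃ * ((k:ℝ)/(N:ℝ)) ^ ε * Real.log (N:ℝ) ^ ν))) := by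
          apply mul_le_mul_of_nonneg_left _ hka
          apply mul_le_mul_of_nonneg_left _ hC
          exact mul_le_mul_of_nonneg_left e3 hkb
      _ = (a+1) * C * C₃ * (N:ℝ)^(-ε) * Real.log (N:ℝ) ^ ν * ((k:ℝ)^(-a-1) * ((k:ℝ)^b * (k:ℝ)^ε)) := by
          rw [m1]; ring
      _ = D * (k:ℝ)^(-s) := by rw [m2, hDdef]
  have hsum1 : ∑ k ∈ Icc N M, (f k - f (k + 1)) * S k ≤ D * ((2 / min 1 ε) * (N:ℝ)^(1-s)) := by
    calc ∑ k ∈ Icc N M, (f k - f (k + 1)) * S k ≤ ∑ k ∈ Icc N M, D * (k:ℝ)^(-s) :=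
          Finset.sum_le_sum hkey
      _ = D * ∑ k ∈ Icc N M, (k:ℝ)^(-s) := by rw [Finset.mul_sum]
      _ ≤ D * ((2 / min 1 (s-1)) * (N:ℝ)^(1-s)) := by
          apply mul_le_mul_of_nonneg_left (sum_Icc_rpow_neg_le hs1 N M hN1) hD0
      _ = D * ((2 / min 1 ε) * (N:ℝ)^(1-s)) := by rw [hsε]
  -- boundary term
  have hM3 : (3:ℝ) ≤ (M:ℝ) := le_trans hN3R (by exact_mod_cast hMN)
  have hM0 : (0:ℝ) < (M:ℝ) := by linarith
  have hbdry : f (M + 1) * S M ≤ C * C₃ * ((N:ℝ)^(b-a) * Real.log (N:ℝ) ^ ν) := by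
    have hfM : f (M+1) ≤ (M:ℝ)^(-a) := by
      have hcast : f (M+1) = ((M:ℝ) + 1) ^ (-a) := by rw [hfdef]; push_cast; ring_nf
      rw [hcast]
      exact Real.rpow_le_rpow_of_nonpos hM0 (by linarith) (by linarith)
    have e2 : S M ≤ C * ((M:ℝ)^b * Real.log M ^ ν) := hSb M (le_trans hN0' hMN)
    have e3 : Real.log (M:ℝ) ^ ν ≤ C₃ * ((M:ℝ)/(N:ℝ)) ^ ε * Real.log (N:ℝ) ^ ν :=
      hC₃ (N:ℝ) (M:ℝ) hN3R (by exact_mod_cast hMN)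
    have hMb : (0:ℝ) ≤ (M:ℝ)^b := Real.rpow_nonneg hM0.le _
    have hMa : (0:ℝ) ≤ (M:ℝ)^(-a) := Real.rpow_nonneg hM0.le _
    have m1 : ((M:ℝ)/(N:ℝ))^ε = (M:ℝ)^ε * (N:ℝ)^(-ε) := by
      rw [Real.div_rpow hM0.le hN0.le, Real.rpow_neg hN0.le, div_eq_mul_inv]
    have m2 : (M:ℝ)^(-a) * ((M:ℝ)^b * (M:ℝ)^ε) = (M:ℝ)^(b-a+ε) := by
      rw [← Real.rpow_add hM0, ← Real.rpow_add hM0]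
      congr 1; ring
    have m3 : (M:ℝ)^(b-a+ε) ≤ (N:ℝ)^(b-a+ε) := by
      apply Real.rpow_le_rpow_of_nonpos hN0 (by exact_mod_cast hMN)
      rw [hεdef]; linarith
    have m4 : (N:ℝ)^(b-a+ε) * (N:ℝ)^(-ε) = (N:ℝ)^(b-a) := by
      rw [← Real.rpow_add hN0]; congr 1; ring
    calc f (M + 1) * S M ≤ (M:ℝ)^(-a) * (C * ((M:ℝ)^b * Real.log M ^ ν)) := by
          apply mul_le_mul hfM e2 (hS0 M) hMa
      _ ≤ (M:ℝ)^(-a) * (C * ((M:ℝ)^b * (C₃ * ((M:ℝ)/(N:ℝ)) ^ ε * Real.log (N:ℝ) ^ ν))) := by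
          apply mul_le_mul_of_nonneg_left _ hMa
          apply mul_le_mul_of_nonneg_left _ hC
          exact mul_le_mul_of_nonneg_left e3 hMb
      _ = C * C₃ * Real.log (N:ℝ) ^ ν * ((M:ℝ)^(-a) * ((M:ℝ)^b * (M:ℝ)^ε)) * (N:ℝ)^(-ε) := by
          rw [m1]; ring
      _ = C * C₃ * Real.log (N:ℝ) ^ ν * (M:ℝ)^(b-a+ε) * (N:ℝ)^(-ε) := by rw [m2]
      _ ≤ C * C₃ * Real.log (N:ℝ) ^ ν * (N:ℝ)^(b-a+ε) * (N:ℝ)^(-ε) := by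
          have hNε : (0:ℝ) ≤ (N:ℝ)^(-ε) := Real.rpow_nonneg hN0.le _
          apply mul_le_mul_of_nonneg_right _ hNε
          apply mul_le_mul_of_nonneg_left m3
          positivity
      _ = C * C₃ * ((N:ℝ)^(b-a) * Real.log (N:ℝ) ^ ν) := by
          rw [mul_assoc (C * C₃ * Real.log (N:ℝ) ^ ν), m4]; ring
  -- combine
  have hDfin : D * ((2 / min 1 ε) * (N:ℝ)^(1-s)) =
      (a+1) * C * C₃ * (2 / min 1 ε) * ((N:ℝ)^(b-a) * Real.log (N:ℝ) ^ ν) := by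
    have m5 : (N:ℝ)^(-ε) * (N:ℝ)^(1-s) = (N:ℝ)^(b-a) := by
      rw [← Real.rpow_add hN0]; congr 1
      rw [hsdef, hεdef]; ring
    rw [hDdef, ← m5]; ring
  rw [hstep0]
  calc ∑ k ∈ Icc N M, f k * d k
      ≤ ∑ k ∈ Icc N M, (f k - f (k + 1)) * S k + f (M + 1) * S M := habel
    _ ≤ D * ((2 / min 1 ε) * (N:ℝ)^(1-s)) + C * C₃ * ((N:ℝ)^(b-a) * Real.log (N:ℝ) ^ ν) := by
        exact add_le_add hsum1 hbdry
    _ = K * ((N:ℝ)^(b-a) * Real.log (N:ℝ) ^ ν) := by rw [hDfin, hKdef]; ring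

lemma reverse_head_bound (ν a b : ℝ) (hb : 0 < b) (hba : b < a)
    (c : ℕ → ℝ) (hc : ∀ k, 0 ≤ c k) (hsum : Summable c)
    (C : ℝ) (hC : 0 ≤ C) (N₂ : ℕ) (hN₂ : 3 ≤ N₂)
    (hT : ∀ k : ℕ, N₂ ≤ k → (∑' i : ℕ, c (k + i)) ≤ C * ((k:ℝ)^(b-a) * Real.log k ^ ν)) :
    ∃ K J : ℝ, 0 ≤ K ∧ ∀ N : ℕ, N₂ ≤ N →
      ∑ j ∈ Icc 1 N, (j:ℝ)^a * c j ≤ J + K * ((N:ℝ)^b * Real.log N ^ ν) := by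
  have ha : 0 < a := by linarith
  set T : ℕ → ℝ := fun k => ∑' i : ℕ, c (k + i) with hTdef
  have hsk : ∀ k : ℕ, Summable (fun i => c (k + i)) := by
    intro k
    have : (fun i => c (k + i)) = fun i => c (i + k) := by
      funext i; congr 1; omega
    rw [this]
    exact (summable_nat_add_iff k).mpr hsum
  have hTnn : ∀ k, 0 ≤ T k := fun k => tsum_nonneg fun i => hc _
  have hcT : ∀ k, c k = T k - T (k + 1) := by
    intro k
    have h0 := (hsk k).tsum_eq_zero_add
    have h1 : ∑' i : ℕ, c (k + (i + 1)) = T (k + 1) := by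
      apply tsum_congr; intro i; congr 1; omega
    rw [hTdef]
    simp only
    rw [h0, h1]
    simp [hTdef]
  set g : ℕ → ℝ := fun k => (k:ℝ)^a with hgdef
  have hg0 : g 0 = 0 := by
    rw [hgdef]; simp [Real.zero_rpow ha.ne']
  have hgnn : ∀ k, 0 ≤ g k := fun k => Real.rpow_nonneg (Nat.cast_nonneg k) _
  have hgmono : ∀ k : ℕ, 1 ≤ k → 0 ≤ g k - g (k - 1) := by
    intro k hk
    have : ((k - 1 : ℕ):ℝ) ≤ (k:ℝ) := by
      have : (k:ℕ) - 1 ≤ k := by omega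
      exact_mod_cast this
    have := Real.rpow_le_rpow (Nat.cast_nonneg (k-1)) this ha.le
    rw [hgdef]; simp only; linarith
  set ε := b / 2 with hεdef
  have hε : 0 < ε := by rw [hεdef]; linarith
  obtain ⟨C₄, hC₄1, hC₄⟩ := log_rpow_head ν hε
  have hC₄0 : 0 ≤ C₄ := by linarith
  set t := b / 2 - 1 with htdef
  have ht : -1 < t := by rw [htdef]; linarith
  have htε : t + 1 = ε := by rw [htdef, hεdef]; ring
  set K := (a + 1) * C * C₄ * (1 / min 1 ε) with hKdef
  have hmin : (0:ℝ) < min 1 ε := lt_min one_pos hε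
  have hK0 : 0 ≤ K := by
    have : (0:ℝ) < a + 1 := by linarith
    rw [hKdef]; positivity
  refine ⟨K, ∑ k ∈ Icc 1 N₂, (g k - g (k - 1)) * T k, hK0, fun N hN => ?_⟩
  have hN3 : 3 ≤ N := le_trans hN₂ hN
  have hN3R : (3:ℝ) ≤ (N:ℝ) := by exact_mod_cast hN3
  have hN0 : (0:ℝ) < (N:ℝ) := by linarith
  have hLN : 1 ≤ Real.log N := one_le_log_of_three_le hN3R
  have hLN0 : 0 ≤ Real.log (N:ℝ) ^ ν := Real.rpow_nonneg (by linarith) _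
  -- rewrite the weighted sum and apply Abel
  have hstep0 : ∑ j ∈ Icc 1 N, (j:ℝ)^a * c j = ∑ j ∈ Icc 1 N, g j * (T j - T (j + 1)) := by
    apply Finset.sum_congr rfl
    intro j _
    rw [hgdef, ← hcT j]
  have habel := abel_head g T hg0 N
  have hdrop : ∑ j ∈ Icc 1 N, g j * (T j - T (j + 1)) ≤
      ∑ k ∈ Icc 1 N, (g k - g (k - 1)) * T k := by
    rw [habel]
    have : 0 ≤ g N * T (N + 1) := mul_nonneg (hgnn N) (hTnn _)
    linarith
  -- split the sum
  have hsplit : ∑ k ∈ Icc 1 N, (g k - g (k - 1)) * T k =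
      ∑ k ∈ Icc 1 N₂, (g k - g (k - 1)) * T k + ∑ k ∈ Ioc N₂ N, (g k - g (k - 1)) * T k := by
    have h1 : Icc 1 N = Ioc 0 N := by rw [← Finset.Icc_add_one_left_eq_Ioc, zero_add]
    have h2 : Icc 1 N₂ = Ioc 0 N₂ := by rw [← Finset.Icc_add_one_left_eq_Ioc, zero_add]
    rw [h1, h2, Finset.sum_Ioc_consecutive _ (Nat.zero_le N₂) hN]
  -- bound the Ioc part
  have hkey : ∀ k ∈ Ioc N₂ N, (g k - g (k - 1)) * T k ≤
      ((a+1) * C * C₄ * (N:ℝ)^ε * Real.log (N:ℝ) ^ ν) * (k:ℝ)^t := by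
    intro k hk
    simp only [mem_Ioc] at hk
    have hk2 : N₂ ≤ k := le_of_lt hk.1
    have hk3 : (3:ℝ) ≤ (k:ℝ) := by
      have : (3:ℕ) ≤ k := le_trans hN₂ hk2
      exact_mod_cast this
    have hk1 : (1:ℝ) ≤ (k:ℝ) := by linarith
    have hk0 : (0:ℝ) < (k:ℝ) := by linarith
    have hkN : (k:ℝ) ≤ (N:ℝ) := by exact_mod_cast hk.2
    have hcast : g (k - 1) = ((k:ℝ) - 1) ^ a := by
      rw [hgdef]
      simp only
      congr 1
      have hk1' : 1 ≤ k := by omega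
      push_cast [hk1']
      ring
    have e1 : g k - g (k - 1) ≤ (a + 1) * (k:ℝ)^(a-1) := by
      rw [hcast, hgdef]
      exact rpow_sub_sub_le hk1 ha
    have e2 : T k ≤ C * ((k:ℝ)^(b-a) * Real.log k ^ ν) := hT k hk2
    have e3 : Real.log (k:ℝ) ^ ν ≤ C₄ * ((N:ℝ)/(k:ℝ)) ^ ε * Real.log (N:ℝ) ^ ν :=
      hC₄ (k:ℝ) (N:ℝ) hk3 hkN
    have hkba : (0:ℝ) ≤ (k:ℝ)^(b-a) := Real.rpow_nonneg hk0.le _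
    have hka : (0:ℝ) ≤ (a+1) * (k:ℝ)^(a-1) := by
      have := Real.rpow_nonneg hk0.le (a-1)
      have : (0:ℝ) < a + 1 := by linarith
      positivity
    have m1 : ((N:ℝ)/(k:ℝ))^ε = (N:ℝ)^ε * (k:ℝ)^(-ε) := by
      rw [Real.div_rpow hN0.le hk0.le, Real.rpow_neg hk0.le, div_eq_mul_inv]
    have m2 : (k:ℝ)^(a-1) * ((k:ℝ)^(b-a) * (k:ℝ)^(-ε)) = (k:ℝ)^t := by
      rw [← Real.rpow_add hk0, ← Real.rpow_add hk0]
      congr 1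
      rw [htdef, hεdef]; ring
    calc (g k - g (k - 1)) * T k
        ≤ ((a + 1) * (k:ℝ)^(a-1)) * (C * ((k:ℝ)^(b-a) * Real.log k ^ ν)) :=
          mul_le_mul e1 e2 (hTnn k) hka
      _ ≤ ((a + 1) * (k:ℝ)^(a-1)) * (C * ((k:ℝ)^(b-a) * (C₄ * ((N:ℝ)/(k:ℝ)) ^ ε * Real.log (N:ℝ) ^ ν))) := by
          apply mul_le_mul_of_nonneg_left _ hka
          apply mul_le_mul_of_nonneg_left _ hC
          exact mul_le_mul_of_nonneg_left e3 hkba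
      _ = ((a+1) * C * C₄ * (N:ℝ)^ε * Real.log (N:ℝ) ^ ν) * ((k:ℝ)^(a-1) * ((k:ℝ)^(b-a) * (k:ℝ)^(-ε))) := by
          rw [m1]; ring
      _ = ((a+1) * C * C₄ * (N:ℝ)^ε * Real.log (N:ℝ) ^ ν) * (k:ℝ)^t := by rw [m2]
  have hsum2 : ∑ k ∈ Ioc N₂ N, (g k - g (k - 1)) * T k ≤ K * ((N:ℝ)^b * Real.log (N:ℝ) ^ ν) := by
    have hpos : (0:ℝ) ≤ (a+1) * C * C₄ * (N:ℝ)^ε * Real.log (N:ℝ) ^ ν := by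
      have := Real.rpow_nonneg hN0.le ε
      have : (0:ℝ) < a + 1 := by linarith
      positivity
    calc ∑ k ∈ Ioc N₂ N, (g k - g (k - 1)) * T k
        ≤ ∑ k ∈ Ioc N₂ N, ((a+1) * C * C₄ * (N:ℝ)^ε * Real.log (N:ℝ) ^ ν) * (k:ℝ)^t :=
          Finset.sum_le_sum hkey
      _ = ((a+1) * C * C₄ * (N:ℝ)^ε * Real.log (N:ℝ) ^ ν) * ∑ k ∈ Ioc N₂ N, (k:ℝ)^t := by
          rw [Finset.mul_sum]
      _ ≤ ((a+1) * C * C₄ * (N:ℝ)^ε * Real.log (N:ℝ) ^ ν) * ((1 / min 1 ε) * (N:ℝ)^ε) := by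
          apply mul_le_mul_of_nonneg_left _ hpos
          have hsub : ∑ k ∈ Ioc N₂ N, (k:ℝ)^t ≤ ∑ k ∈ Icc 1 N, (k:ℝ)^t := by
            apply Finset.sum_le_sum_of_subset_of_nonneg
            · intro x hx
              simp only [mem_Ioc, mem_Icc] at hx ⊢
              omega
            · intro i _ _
              exact Real.rpow_nonneg (Nat.cast_nonneg i) _
          calc ∑ k ∈ Ioc N₂ N, (k:ℝ)^t ≤ ∑ k ∈ Icc 1 N, (k:ℝ)^t := hsub
            _ ≤ (1 / min 1 (t+1)) * (N:ℝ)^(t+1) := sum_Icc_rpow_le ht N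
            _ = (1 / min 1 ε) * (N:ℝ)^ε := by rw [htε]
      _ = K * (((N:ℝ)^ε * (N:ℝ)^ε) * Real.log (N:ℝ) ^ ν) := by rw [hKdef]; ring
      _ = K * ((N:ℝ)^b * Real.log (N:ℝ) ^ ν) := by
          rw [← Real.rpow_add hN0]
          congr 3
          rw [hεdef]; ring
  calc ∑ j ∈ Icc 1 N, (j:ℝ)^a * c j = ∑ j ∈ Icc 1 N, g j * (T j - T (j + 1)) := hstep0
    _ ≤ ∑ k ∈ Icc 1 N, (g k - g (k - 1)) * T k := hdrop
    _ = ∑ k ∈ Icc 1 N₂, (g k - g (k - 1)) * T k + ∑ k ∈ Ioc N₂ N, (g k - g (k - 1)) * T k := hsplit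
    _ ≤ ∑ k ∈ Icc 1 N₂, (g k - g (k - 1)) * T k + K * ((N:ℝ)^b * Real.log (N:ℝ) ^ ν) := by
        linarith [hsum2]

end DurenHelpers

/-- **Logarithmically weighted Duren lemma.** For `ν ∈ ℝ`, a nonnegative sequence `c` and
`0 < b < a`, the weighted partial sums `∑_{k=1}^N k^a c_k` are `O(N^b (log N)^ν)` as `N → ∞`
if and only if the tail sums `∑_{k=N}^∞ c_k` are (well defined and) `O(N^{b-a} (log N)^ν)`. -/
theorem duren_lemma_log (ν : ℝ) (c : ℕ → ℝ) (hc : ∀ k, 0 ≤ c k) (a b : ℝ)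
    (hb : 0 < b) (hba : b < a) :
    (fun N : ℕ => ∑ k ∈ Finset.Icc 1 N, (k : ℝ) ^ a * c k) =O[atTop]
      (fun N : ℕ => (N : ℝ) ^ b * Real.log N ^ ν) ↔
    (Summable c ∧
      (fun N : ℕ => ∑' i : ℕ, c (N + i)) =O[atTop]
        (fun N : ℕ => (N : ℝ) ^ (b - a) * Real.log N ^ ν)) := by
  have hWpos : ∀ w : ℝ, ∀ N : ℕ, 3 ≤ N → 0 ≤ (N:ℝ)^w * Real.log N ^ ν := by
    intro w N hN
    have hN3R : (3:ℝ) ≤ (N:ℝ) := by exact_mod_cast hN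
    have h1 : (0:ℝ) ≤ (N:ℝ)^w := Real.rpow_nonneg (by linarith) _
    have h2 : (0:ℝ) ≤ Real.log N ^ ν :=
      Real.rpow_nonneg (by linarith [one_le_log_of_three_le hN3R]) _
    positivity
  constructor
  · intro h
    rcases Asymptotics.isBigO_iff.mp h with ⟨C0, hC0⟩
    rcases Filter.eventually_atTop.mp hC0 with ⟨N₀, hN₀⟩
    set C := max C0 0 with hCdef
    have hC : 0 ≤ C := le_max_right _ _
    set N₁ := max N₀ 3 with hN₁def
    have hS : ∀ k : ℕ, N₁ ≤ k →
        ∑ j ∈ Finset.Icc 1 k, (j:ℝ)^a * c j ≤ C * ((k:ℝ)^b * Real.log k ^ ν) := by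
      intro k hk
      have h3 : 3 ≤ k := le_trans (le_max_right _ _) hk
      have hW0 := hWpos b k h3
      have hcb := hN₀ k (le_trans (le_max_left _ _) hk)
      rw [Real.norm_eq_abs, Real.norm_eq_abs, abs_of_nonneg hW0] at hcb
      calc ∑ j ∈ Finset.Icc 1 k, (j:ℝ)^a * c j
          ≤ |∑ j ∈ Finset.Icc 1 k, (j:ℝ)^a * c j| := le_abs_self _
        _ ≤ C0 * ((k:ℝ)^b * Real.log k ^ ν) := hcb
        _ ≤ C * ((k:ℝ)^b * Real.log k ^ ν) :=
            mul_le_mul_of_nonneg_right (le_max_left _ _) hW0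
    obtain ⟨K, hK0, hbound⟩ := forward_tail_bound ν a b hb hba c hc C hC N₁ hS
    set N₂ := max N₁ 3 with hN₂def
    have hN₂3 : 3 ≤ N₂ := le_max_right _ _
    have htail : ∀ N : ℕ, N₂ ≤ N → ∀ n : ℕ,
        ∑ i ∈ Finset.range n, c (N + i) ≤ K * ((N:ℝ)^(b-a) * Real.log N ^ ν) := by
      intro N hN n
      cases n with
      | zero =>
          simpa using mul_nonneg hK0 (hWpos (b-a) N (le_trans hN₂3 hN))
      | succ n =>
          have he : ∑ k ∈ Finset.Icc N (N+n), c k = ∑ i ∈ Finset.range (n+1), c (N + i) := by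
            rw [← Finset.Ico_add_one_right_eq_Icc, Finset.sum_Ico_eq_sum_range]
            have h' : N + n + 1 - N = n + 1 := by omega
            rw [h']
          rw [← he]
          exact hbound N hN (N + n)
    have hsummable : Summable c := by
      apply summable_of_sum_range_le (c :=
        (∑ i ∈ Finset.range N₂, c i) + K * ((N₂:ℝ)^(b-a) * Real.log N₂ ^ ν)) hc
      intro n
      have hsubset : Finset.range n ⊆ Finset.range N₂ ∪ Finset.Icc N₂ n := by
        intro i hi
        simp only [Finset.mem_range, Finset.mem_union, Finset.mem_Icc] at *
        omega
      have hdisj : Disjoint (Finset.range N₂) (Finset.Icc N₂ n) := by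
        rw [Finset.disjoint_left]
        intro i h1 h2
        simp only [Finset.mem_range] at h1
        simp only [Finset.mem_Icc] at h2
        omega
      have hIcc : ∑ k ∈ Finset.Icc N₂ n, c k ≤ K * ((N₂:ℝ)^(b-a) * Real.log N₂ ^ ν) :=
        hbound N₂ (le_refl _) n
      calc ∑ i ∈ Finset.range n, c i
          ≤ ∑ i ∈ Finset.range N₂ ∪ Finset.Icc N₂ n, c i :=
            Finset.sum_le_sum_of_subset_of_nonneg hsubset (fun i _ _ => hc i)
        _ = ∑ i ∈ Finset.range N₂, c i + ∑ k ∈ Finset.Icc N₂ n, c k :=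
            Finset.sum_union hdisj
        _ ≤ _ := by linarith
    refine ⟨hsummable, Asymptotics.isBigO_iff.mpr ⟨K, ?_⟩⟩
    filter_upwards [Filter.eventually_ge_atTop N₂] with N hN
    have h3 : 3 ≤ N := le_trans hN₂3 hN
    have hW0 := hWpos (b-a) N h3
    have hT0 : 0 ≤ ∑' i : ℕ, c (N + i) := tsum_nonneg fun i => hc _
    rw [Real.norm_eq_abs, Real.norm_eq_abs, abs_of_nonneg hT0, abs_of_nonneg hW0]
    exact Real.tsum_le_of_sum_range_le (fun i => hc _) (htail N hN)
  · rintro ⟨hsum, h⟩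
    rcases Asymptotics.isBigO_iff.mp h with ⟨C0, hC0⟩
    rcases Filter.eventually_atTop.mp hC0 with ⟨N₀, hN₀⟩
    set C := max C0 0 with hCdef
    have hC : 0 ≤ C := le_max_right _ _
    set N₂ := max N₀ 3 with hN₂def
    have hN₂3 : 3 ≤ N₂ := le_max_right _ _
    have hT : ∀ k : ℕ, N₂ ≤ k →
        (∑' i : ℕ, c (k + i)) ≤ C * ((k:ℝ)^(b-a) * Real.log k ^ ν) := by
      intro k hk
      have h3 : 3 ≤ k := le_trans (le_max_right _ _) hk
      have hW0 := hWpos (b-a) k h3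
      have hcb := hN₀ k (le_trans (le_max_left _ _) hk)
      rw [Real.norm_eq_abs, Real.norm_eq_abs, abs_of_nonneg hW0] at hcb
      calc (∑' i : ℕ, c (k + i)) ≤ |∑' i : ℕ, c (k + i)| := le_abs_self _
        _ ≤ C0 * ((k:ℝ)^(b-a) * Real.log k ^ ν) := hcb
        _ ≤ C * ((k:ℝ)^(b-a) * Real.log k ^ ν) :=
            mul_le_mul_of_nonneg_right (le_max_left _ _) hW0
    obtain ⟨K, J, hK0, hbound⟩ := reverse_head_bound ν a b hb hba c hc hsum C hC N₂ hN₂3 hT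
    refine Asymptotics.isBigO_iff.mpr ⟨|J| + K, ?_⟩
    filter_upwards [Filter.eventually_ge_atTop N₂,
      one_le_rpow_mul_log_eventually ν hb] with N hN hgrow
    have h3 : 3 ≤ N := le_trans hN₂3 hN
    have hW0 := hWpos b N h3
    have hS0 : 0 ≤ ∑ k ∈ Finset.Icc 1 N, (k:ℝ)^a * c k :=
      Finset.sum_nonneg fun k _ => mul_nonneg (Real.rpow_nonneg (Nat.cast_nonneg k) _) (hc k)
    rw [Real.norm_eq_abs, Real.norm_eq_abs, abs_of_nonneg hS0, abs_of_nonneg hW0]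
    have hmain := hbound N hN
    have hJ : J ≤ |J| * ((N:ℝ)^b * Real.log N ^ ν) := by
      calc J ≤ |J| := le_abs_self J
        _ = |J| * 1 := (mul_one _).symm
        _ ≤ |J| * ((N:ℝ)^b * Real.log N ^ ν) :=
            mul_le_mul_of_nonneg_left hgrow (abs_nonneg J)
    calc ∑ k ∈ Finset.Icc 1 N, (k:ℝ)^a * c k
        ≤ J + K * ((N:ℝ)^b * Real.log N ^ ν) := hmain
      _ ≤ |J| * ((N:ℝ)^b * Real.log N ^ ν) + K * ((N:ℝ)^b * Real.log N ^ ν) := by linarith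
      _ = (|J| + K) * ((N:ℝ)^b * Real.log N ^ ν) := by ring
end

section
/- Let $G$ be a compact Vilenkin group and $\sigma$ a matrix-valued function on the unitary dual $\widehat{G}$ with $\sigma(\xi) \in \mathbb{C}^{d_\xi \times d_\xi}$. Let $1 \leq r < \infty$ and $\gamma > 0$. If $\sum_{[\xi] \in \widehat{G}} d_\xi^{r(2/r - 1/2)} \langle \xi \rangle_{\mathscr{G}}^{\gamma r} \|\sigma(\xi)\|_{HS}^r < \infty$, then for every $\beta$ with $\frac{r}{1 + \gamma r} < \beta < \infty$ we have $\sum_{[\xi] \in \widehat{G}} d_\xi^{\beta(2/\beta - 1/2)} \|\sigma(\xi)\|_{HS}^\beta < \infty$. -/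
open MeasureTheory Filter Asymptotics

noncomputable section

/-- The Hilbert–Schmidt (Frobenius) norm of a complex square matrix. -/
def hsNorm {n : ℕ} (M : Matrix (Fin n) (Fin n) ℂ) : ℝ :=
  Real.sqrt (∑ i, ∑ j, ‖M i j‖ ^ 2)

/-- Irreducibility of a unitary representation, via Schur's commutant criterion. -/
def IsIrreducibleRep {G : Type*} [Group G] {n : ℕ}
    (ξ : G →* Matrix.unitaryGroup (Fin n) ℂ) : Prop :=
  ∀ M : Matrix (Fin n) (Fin n) ℂ,
    (∀ x : G, M * (ξ x : Matrix (Fin n) (Fin n) ℂ) = (ξ x : Matrix (Fin n) (Fin n) ℂ) * M) →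
      ∃ c : ℂ, M = c • (1 : Matrix (Fin n) (Fin n) ℂ)

/-- The Fourier coefficient `f̂(ξ) = ∫_G f(x) ξ(x)* dμ(x)` of `f` at a unitary
representation `ξ`. -/
def fourierCoef {G : Type*} [Group G] [TopologicalSpace G] [MeasurableSpace G]
    (μ : Measure G) (f : G → ℂ) {n : ℕ}
    (ξ : G →* Matrix.unitaryGroup (Fin n) ℂ) : Matrix (Fin n) (Fin n) ℂ :=
  Matrix.of fun i j => ∫ x, f x * (starRingEnd ℂ) ((ξ x : Matrix (Fin n) (Fin n) ℂ) j i) ∂μ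

/-- A compact Vilenkin group structure on a profinite group `G`: a strictly decreasing
sequence of open subgroups starting at `G`, forming a neighbourhood basis of the identity,
with finite indices and `2 ≤ |G_n/G_{n+1}|`. -/
structure VilenkinData (G : Type*) [Group G] [TopologicalSpace G] where
  seq : ℕ → Subgroup G
  top_eq : seq 0 = ⊤
  isOpen : ∀ n, IsOpen (seq n : Set G)
  strictAnti : StrictAnti seq
  basis : (nhds (1 : G)).HasBasis (fun _ : ℕ => True) fun n => (seq n : Set G)
  index_ne_zero : ∀ n, (seq n).index ≠ 0
  two_le_relindex : ∀ n, 2 ≤ (seq (n + 1)).relIndex (seq n)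

/-- **Auxiliary summability proposition.** Let `G` be a compact Vilenkin group with unitary
dual indexed by `ι` (dimensions `dim`, levels `lvl`, satisfying the Peter–Weyl counting
identity `∑_{⟨ξ⟩ ≤ |G/G_n|} d_ξ² = |G/G_n|`). If
`∑ d_ξ^{r(2/r-1/2)} ⟨ξ⟩^{γr} ‖σ(ξ)‖_HS^r < ∞` then
`∑ d_ξ^{β(2/β-1/2)} ‖σ(ξ)‖_HS^β < ∞` for all `β` with `r/(1+γr) < β < ∞`. -/
theorem summability_shift
    {G : Type*} [Group G] [TopologicalSpace G] [IsTopologicalGroup G] [CompactSpace G]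
    [TotallyDisconnectedSpace G]
    (V : VilenkinData G) (ι : Type) (dim : ι → ℕ) (hdim : ∀ i, 0 < dim i) (lvl : ι → ℕ)
    (hcount : ∀ n, HasSum (fun i : {i // lvl i ≤ n} => ((dim i.1 : ℝ)) ^ 2)
      ((V.seq n).index : ℝ))
    (σ : ∀ i, Matrix (Fin (dim i)) (Fin (dim i)) ℂ)
    (r γ : ℝ) (hr : 1 ≤ r) (hγ : 0 < γ)
    (hσ : Summable fun i =>
      (dim i : ℝ) ^ (r * (2 / r - 1 / 2)) * ((V.seq (lvl i)).index : ℝ) ^ (γ * r) *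
        hsNorm (σ i) ^ r) :
    ∀ β : ℝ, r / (1 + γ * r) < β →
      Summable fun i => (dim i : ℝ) ^ (β * (2 / β - 1 / 2)) * hsNorm (σ i) ^ β := by
  intro β hβ
  have hr0 : (0:ℝ) < r := lt_of_lt_of_le one_pos hr
  have hden : (0:ℝ) < 1 + γ * r := by positivity
  have hβ0 : (0:ℝ) < β := lt_trans (div_pos hr0 hden) hβ
  have hd1 : ∀ i, (1:ℝ) ≤ (dim i : ℝ) := fun i => by exact_mod_cast hdim i
  have hd0 : ∀ i, (0:ℝ) < (dim i : ℝ) := fun i => lt_of_lt_of_le one_pos (hd1 i)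
  have hN1 : ∀ i, (1:ℝ) ≤ ((V.seq (lvl i)).index : ℝ) := fun i => by
    exact_mod_cast Nat.one_le_iff_ne_zero.mpr (V.index_ne_zero (lvl i))
  have hN0 : ∀ i, (0:ℝ) < ((V.seq (lvl i)).index : ℝ) :=
    fun i => lt_of_lt_of_le one_pos (hN1 i)
  have ha : ∀ i, 0 ≤ hsNorm (σ i) := fun i => Real.sqrt_nonneg _
  set t : ι → ℝ := fun i =>
    (dim i : ℝ) ^ (r * (2 / r - 1 / 2)) * ((V.seq (lvl i)).index : ℝ) ^ (γ * r) *
      hsNorm (σ i) ^ r with ht_def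
  have ht0 : ∀ i, 0 ≤ t i := fun i => by
    have h1 := (hd0 i).le; have h2 := (hN0 i).le; have h3 := ha i
    exact mul_nonneg (mul_nonneg (Real.rpow_nonneg h1 _) (Real.rpow_nonneg h2 _))
      (Real.rpow_nonneg h3 _)
  have hgoal0 : ∀ i, 0 ≤ (dim i : ℝ) ^ (β * (2 / β - 1 / 2)) * hsNorm (σ i) ^ β :=
    fun i => mul_nonneg (Real.rpow_nonneg (hd0 i).le _) (Real.rpow_nonneg (ha i) _)
  -- key expansion of the goal term
  have key : ∀ i, (dim i : ℝ) ^ (β * (2 / β - 1 / 2)) * hsNorm (σ i) ^ β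
      = t i ^ (β / r) * ((dim i : ℝ) ^ (2 * (1 - β / r)) *
          ((V.seq (lvl i)).index : ℝ) ^ (-(γ * β))) := by
    intro i
    have h1 : t i ^ (β / r)
        = (dim i : ℝ) ^ ((r * (2 / r - 1 / 2)) * (β / r)) *
          ((V.seq (lvl i)).index : ℝ) ^ ((γ * r) * (β / r)) *
          hsNorm (σ i) ^ (r * (β / r)) := by
      rw [ht_def]
      rw [Real.mul_rpow (mul_nonneg (Real.rpow_nonneg (hd0 i).le _)
            (Real.rpow_nonneg (hN0 i).le _)) (Real.rpow_nonneg (ha i) _),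
          Real.mul_rpow (Real.rpow_nonneg (hd0 i).le _) (Real.rpow_nonneg (hN0 i).le _),
          ← Real.rpow_mul (hd0 i).le, ← Real.rpow_mul (hN0 i).le, ← Real.rpow_mul (ha i)]
    rw [h1]
    have eC : r * (β / r) = β := by field_simp
    rw [eC]
    have step : (dim i : ℝ) ^ ((r * (2 / r - 1 / 2)) * (β / r)) *
          ((V.seq (lvl i)).index : ℝ) ^ ((γ * r) * (β / r)) * hsNorm (σ i) ^ β *
          ((dim i : ℝ) ^ (2 * (1 - β / r)) * ((V.seq (lvl i)).index : ℝ) ^ (-(γ * β)))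
        = ((dim i : ℝ) ^ ((r * (2 / r - 1 / 2)) * (β / r)) * (dim i : ℝ) ^ (2 * (1 - β / r))) *
          (((V.seq (lvl i)).index : ℝ) ^ ((γ * r) * (β / r)) *
            ((V.seq (lvl i)).index : ℝ) ^ (-(γ * β))) * hsNorm (σ i) ^ β := by ring
    rw [step, ← Real.rpow_add (hd0 i), ← Real.rpow_add (hN0 i)]
    have eA : (r * (2 / r - 1 / 2)) * (β / r) + 2 * (1 - β / r) = β * (2 / β - 1 / 2) := by
      field_simp; ring
    have eB : (γ * r) * (β / r) + (-(γ * β)) = 0 := by field_simp; ring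
    rw [eA, eB, Real.rpow_zero, mul_one]
  rcases le_or_gt r β with hcase | hcase
  · -- case r ≤ β
    have hθ1 : 1 ≤ β / r := (one_le_div hr0).mpr hcase
    set T := ∑' i, t i with hT_def
    set C := max 1 (T ^ (β / r - 1)) with hC_def
    have hC1 : (1:ℝ) ≤ C := le_max_left _ _
    have hle : ∀ i, (dim i : ℝ) ^ (β * (2 / β - 1 / 2)) * hsNorm (σ i) ^ β ≤ C * t i := by
      intro i
      rw [key i]
      have h2 : (dim i : ℝ) ^ (2 * (1 - β / r)) *
          ((V.seq (lvl i)).index : ℝ) ^ (-(γ * β)) ≤ 1 := by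
        have hx : (dim i : ℝ) ^ (2 * (1 - β / r)) ≤ 1 :=
          Real.rpow_le_one_of_one_le_of_nonpos (hd1 i) (by nlinarith)
        have hy : ((V.seq (lvl i)).index : ℝ) ^ (-(γ * β)) ≤ 1 :=
          Real.rpow_le_one_of_one_le_of_nonpos (hN1 i) (by nlinarith)
        calc (dim i : ℝ) ^ (2 * (1 - β / r)) * ((V.seq (lvl i)).index : ℝ) ^ (-(γ * β))
            ≤ 1 * 1 := mul_le_mul hx hy (Real.rpow_nonneg (hN0 i).le _) one_pos.le
          _ = 1 := by ring
      have hti : t i ≤ T := Summable.le_tsum hσ i (fun j _ => ht0 j)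
      have hsplit : t i ^ (β / r) = t i * t i ^ (β / r - 1) := by
        have he : β / r = 1 + (β / r - 1) := by ring
        have hne : (1:ℝ) + (β / r - 1) ≠ 0 := by rw [← he]; positivity
        have h' := Real.rpow_add' (ht0 i) hne
        rw [← he, Real.rpow_one] at h'
        exact h'
      have hpow : t i ^ (β / r - 1) ≤ C := by
        rcases le_or_gt (t i) 1 with h | h
        · exact le_trans (Real.rpow_le_one (ht0 i) h (by linarith)) hC1
        · exact le_trans (Real.rpow_le_rpow (ht0 i) hti (by linarith)) (le_max_right _ _)
      calc t i ^ (β / r) * ((dim i : ℝ) ^ (2 * (1 - β / r)) *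
            ((V.seq (lvl i)).index : ℝ) ^ (-(γ * β)))
          ≤ t i ^ (β / r) * 1 :=
            mul_le_mul_of_nonneg_left h2 (Real.rpow_nonneg (ht0 i) _)
        _ = t i * t i ^ (β / r - 1) := by rw [mul_one, hsplit]
        _ ≤ t i * C := mul_le_mul_of_nonneg_left hpow (ht0 i)
        _ = C * t i := by ring
    exact Summable.of_nonneg_of_le hgoal0 hle (hσ.mul_left C)
  · -- case β < r
    have hrβ : (0:ℝ) < r - β := by linarith
    set s := γ * β * r / (r - β) with hs_def
    have hs1 : 1 < s := by
      rw [hs_def, lt_div_iff₀ hrβ]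
      have h := (div_lt_iff₀ hden).mp hβ
      nlinarith
    have hθ0 : 0 < β / r := div_pos hβ0 hr0
    have hθ1 : β / r < 1 := (div_lt_one hr0).mpr hcase
    set v : ι → ℝ := fun i => (dim i : ℝ) ^ 2 * ((V.seq (lvl i)).index : ℝ) ^ (-s) with hv_def
    have hv0 : ∀ i, 0 ≤ v i := fun i =>
      mul_nonneg (sq_nonneg _) (Real.rpow_nonneg (hN0 i).le _)
    have hw : ∀ i, (dim i : ℝ) ^ (2 * (1 - β / r)) *
        ((V.seq (lvl i)).index : ℝ) ^ (-(γ * β)) = v i ^ (1 - β / r) := by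
      intro i
      rw [hv_def]
      rw [Real.mul_rpow (sq_nonneg _) (Real.rpow_nonneg (hN0 i).le _)]
      rw [← Real.rpow_natCast ((dim i : ℝ)) 2, ← Real.rpow_mul (hd0 i).le,
        ← Real.rpow_mul (hN0 i).le]
      have e1 : ((2:ℕ):ℝ) * (1 - β / r) = 2 * (1 - β / r) := by norm_num
      have hr' : r ≠ 0 := ne_of_gt hr0
      have hrβ' : r - β ≠ 0 := ne_of_gt hrβ
      have e2 : -s * (1 - β / r) = -(γ * β) := by
        rw [hs_def]; field_simp
      rw [e1, e2]
    have hle : ∀ i, (dim i : ℝ) ^ (β * (2 / β - 1 / 2)) * hsNorm (σ i) ^ β ≤ t i + v i := by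
      intro i
      rw [key i, hw i]
      have hgm := Real.geom_mean_le_arith_mean2_weighted (w₁ := β / r) (w₂ := 1 - β / r)
        (p₁ := t i) (p₂ := v i) hθ0.le (by linarith) (ht0 i) (hv0 i) (by ring)
      calc t i ^ (β / r) * v i ^ (1 - β / r) ≤ β / r * t i + (1 - β / r) * v i := hgm
        _ ≤ t i + v i := by nlinarith [ht0 i, hv0 i]
    -- indices grow at least geometrically
    have idx_ge : ∀ n, (2:ℕ) ^ n ≤ (V.seq n).index := by
      intro n
      induction n with
      | zero => simp [V.top_eq, Subgroup.index_top]
      | succ n ih =>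
        have hle' : V.seq (n + 1) ≤ V.seq n := (V.strictAnti (Nat.lt_succ_self n)).le
        calc (2:ℕ) ^ (n + 1) = 2 * 2 ^ n := by ring
          _ ≤ (V.seq (n + 1)).relIndex (V.seq n) * (V.seq n).index :=
            Nat.mul_le_mul (V.two_le_relindex n) ih
          _ = (V.seq (n + 1)).index := Subgroup.relIndex_mul_index hle'
    have hbase0 : (0:ℝ) ≤ (2:ℝ) ^ (1 - s) := Real.rpow_nonneg (by norm_num) _
    have hbase1 : (2:ℝ) ^ (1 - s) < 1 :=
      Real.rpow_lt_one_of_one_lt_of_neg one_lt_two (by linarith)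
    have hgeo : Summable (fun n : ℕ => ((2:ℝ) ^ (1 - s)) ^ n) :=
      summable_geometric_of_lt_one hbase0 hbase1
    have hvsum : Summable v := by
      apply summable_of_sum_le (c := ∑' n : ℕ, ((2:ℝ) ^ (1 - s)) ^ n) (fun i => hv0 i)
      intro F
      classical
      have fiber_bound : ∀ n ∈ F.image lvl,
          (∑ i ∈ F.filter (fun i => lvl i = n), v i) ≤ ((2:ℝ) ^ (1 - s)) ^ n := by
        intro n _
        have hidx0 : (0:ℝ) < ((V.seq n).index : ℝ) := by
          exact_mod_cast Nat.pos_of_ne_zero (V.index_ne_zero n)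
        -- the fiber sum of squares is at most the index
        have hA : (∑ i ∈ F.filter (fun i => lvl i = n), ((dim i : ℝ)) ^ 2)
            ≤ ((V.seq n).index : ℝ) := by
          set F' : Finset {i // lvl i ≤ n} :=
            (F.filter (fun i => lvl i = n)).attach.map
              ⟨fun x => ⟨x.1, by
                  have hx := Finset.mem_filter.mp x.2
                  exact le_of_eq hx.2⟩,
                by
                  intro x y hxy
                  simp only [Subtype.mk.injEq] at hxy
                  exact Subtype.ext hxy⟩ with hF'
          have heq : (∑ j ∈ F', ((dim j.1 : ℝ)) ^ 2)
              = ∑ i ∈ F.filter (fun i => lvl i = n), ((dim i : ℝ)) ^ 2 := by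
            rw [hF', Finset.sum_map]
            exact Finset.sum_attach _ (fun i => ((dim i : ℝ)) ^ 2)
          rw [← heq]
          exact sum_le_hasSum F' (fun j _ => sq_nonneg _) (hcount n)
        have hfib : (∑ i ∈ F.filter (fun i => lvl i = n), v i)
            = (∑ i ∈ F.filter (fun i => lvl i = n), ((dim i : ℝ)) ^ 2) *
              ((V.seq n).index : ℝ) ^ (-s) := by
          rw [Finset.sum_mul]
          apply Finset.sum_congr rfl
          intro i hi
          have hlv : lvl i = n := (Finset.mem_filter.mp hi).2
          show (dim i : ℝ) ^ 2 * ((V.seq (lvl i)).index : ℝ) ^ (-s) = _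
          rw [hlv]
        rw [hfib]
        calc (∑ i ∈ F.filter (fun i => lvl i = n), ((dim i : ℝ)) ^ 2) *
              ((V.seq n).index : ℝ) ^ (-s)
            ≤ ((V.seq n).index : ℝ) * ((V.seq n).index : ℝ) ^ (-s) :=
              mul_le_mul_of_nonneg_right hA (Real.rpow_nonneg hidx0.le _)
          _ = ((V.seq n).index : ℝ) ^ (1 - s) := by
              have he : (1:ℝ) - s = 1 + (-s) := by ring
              rw [he, Real.rpow_add hidx0, Real.rpow_one]
          _ ≤ ((2:ℝ) ^ n) ^ (1 - s) := by
              apply Real.rpow_le_rpow_of_nonpos (by positivity) _ (by linarith)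
              have := idx_ge n
              calc ((2:ℝ) ^ n) = (((2:ℕ) ^ n : ℕ) : ℝ) := by push_cast; ring
                _ ≤ ((V.seq n).index : ℝ) := by exact_mod_cast this
          _ = ((2:ℝ) ^ (1 - s)) ^ n := by
              rw [← Real.rpow_natCast (2:ℝ) n, ← Real.rpow_mul (by norm_num : (0:ℝ) ≤ 2),
                mul_comm, Real.rpow_mul (by norm_num : (0:ℝ) ≤ 2), Real.rpow_natCast]
      calc (∑ i ∈ F, v i)
          = ∑ n ∈ F.image lvl, ∑ i ∈ F.filter (fun i => lvl i = n), v i :=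
            (Finset.sum_fiberwise_of_maps_to (fun i hi => Finset.mem_image_of_mem lvl hi) v).symm
        _ ≤ ∑ n ∈ F.image lvl, ((2:ℝ) ^ (1 - s)) ^ n := Finset.sum_le_sum fiber_bound
        _ ≤ ∑' n : ℕ, ((2:ℝ) ^ (1 - s)) ^ n :=
            Summable.sum_le_tsum _ (fun n _ => pow_nonneg hbase0 n) hgeo
    exact Summable.of_nonneg_of_le hgoal0 hle (hσ.add hvsum)

end
end

section
/- Let $G$ be a compact Vilenkin group with subgroup sequence $\{G_n\}$ and let $f \in L^2(\mu_G)$. For every $n \in \mathbb{N}_0$: $\Big(\sum_{\langle \xi \rangle_{\mathscr{G}} > |G/G_n|} d_\xi \|\widehat{f}(\xi)\|_{HS}^2\Big)^{1/2} \leq \frac{1}{\sqrt{2}}\, \omega_2(f, \mathscr{G}, n)$, where $\omega_2(f, \mathscr{G}, n) := \sup_{h \in G_n} \|f(h\,\cdot) - f(\cdot)\|_{L^2(\mu_G)}$. -/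
open MeasureTheory Filter Asymptotics

noncomputable section

/-- Data for the unitary dual `Ĝ` of a compact Vilenkin group `G`: a family of pairwise
inequivalent continuous irreducible unitary representations indexed by `ι`, with dimensions
`dim`, levels `lvl` (so `⟨ξ_i⟩ = |G/G_{lvl i}|`), satisfying the Plancherel identity and the
Peter–Weyl counting identity. -/
structure DualData (G : Type*) [Group G] [TopologicalSpace G] [MeasurableSpace G]
    (V : VilenkinData G) (μ : Measure G) where
  ι : Type
  dim : ι → ℕ
  dim_pos : ∀ i, 0 < dim i
  lvl : ι → ℕ
  rep : ∀ i, G →* Matrix.unitaryGroup (Fin (dim i)) ℂ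
  rep_continuous : ∀ i, Continuous fun x => ((rep i) x : Matrix (Fin (dim i)) (Fin (dim i)) ℂ)
  rep_irr : ∀ i, IsIrreducibleRep (rep i)
  lvl_triv : ∀ i, ∀ x ∈ V.seq (lvl i), rep i x = 1
  lvl_min : ∀ i, 0 < lvl i → ∃ x ∈ V.seq (lvl i - 1), rep i x ≠ 1
  plancherel : ∀ f : G → ℂ, MemLp f 2 μ →
    ∫ x, ‖f x‖ ^ 2 ∂μ = ∑' i, (dim i : ℝ) * hsNorm (fourierCoef μ f (rep i)) ^ 2
  count : ∀ n, HasSum (fun i : {i // lvl i ≤ n} => ((dim i.1 : ℝ)) ^ 2) ((V.seq n).index : ℝ)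

/- ## Auxiliary lemmas -/

open scoped ComplexConjugate Matrix Pointwise
set_option linter.unusedSectionVars false

namespace VilenkinAux

variable {d : ℕ}

lemma hsNorm_sq (M : Matrix (Fin d) (Fin d) ℂ) :
    hsNorm M ^ 2 = ∑ i, ∑ j, ‖M i j‖ ^ 2 :=
  Real.sq_sqrt (by positivity)

lemma hsNorm_sq_eq_trace (M : Matrix (Fin d) (Fin d) ℂ) :
    hsNorm M ^ 2 = (Matrix.trace (Mᴴ * M)).re := by
  rw [hsNorm_sq, Matrix.trace]
  simp only [Matrix.diag_apply, Matrix.mul_apply, Matrix.conjTranspose_apply]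
  rw [Complex.re_sum, Finset.sum_comm]
  refine Finset.sum_congr rfl fun i _ => ?_
  rw [Complex.re_sum]
  refine Finset.sum_congr rfl fun j _ => ?_
  rw [Complex.sq_norm, Complex.star_def, ← Complex.normSq_eq_conj_mul_self]
  simp

lemma hsNorm_sq_mul_unitary (M : Matrix (Fin d) (Fin d) ℂ) (U : Matrix.unitaryGroup (Fin d) ℂ) :
    hsNorm (M * (U : Matrix (Fin d) (Fin d) ℂ)) ^ 2 = hsNorm M ^ 2 := by
  set A := (U : Matrix (Fin d) (Fin d) ℂ)
  rw [hsNorm_sq_eq_trace, hsNorm_sq_eq_trace]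
  congr 1
  have h1 : (M * A)ᴴ * (M * A) = Aᴴ * (Mᴴ * M) * A := by
    rw [Matrix.conjTranspose_mul]; noncomm_ring
  have hUU : A * Aᴴ = 1 := by
    simpa [Matrix.star_eq_conjTranspose] using (Unitary.mul_star_self_of_mem U.2)
  rw [h1, Matrix.trace_mul_cycle, ← Matrix.mul_assoc, hUU, Matrix.one_mul]

lemma hsNorm_sq_mul_sub_one (M : Matrix (Fin d) (Fin d) ℂ) (U : Matrix.unitaryGroup (Fin d) ℂ) :
    hsNorm (M * ((U : Matrix (Fin d) (Fin d) ℂ) - 1)) ^ 2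
      = 2 * hsNorm M ^ 2 - 2 * (Matrix.trace (Mᴴ * M * (U : Matrix (Fin d) (Fin d) ℂ))).re := by
  set A := (U : Matrix (Fin d) (Fin d) ℂ)
  have hMA : ((M * A)ᴴ * (M * A)).trace.re = (Mᴴ * M).trace.re := by
    have h := hsNorm_sq_mul_unitary M U
    rw [hsNorm_sq_eq_trace, hsNorm_sq_eq_trace] at h
    exact h
  rw [hsNorm_sq_eq_trace, hsNorm_sq_eq_trace]
  have expand : (M * (A - 1))ᴴ * (M * (A - 1))
      = (M * A)ᴴ * (M * A) - (M * A)ᴴ * M - Mᴴ * (M * A) + Mᴴ * M := by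
    rw [Matrix.mul_sub, Matrix.mul_one, Matrix.conjTranspose_sub]
    noncomm_ring
  rw [expand, Matrix.trace_add, Matrix.trace_sub, Matrix.trace_sub]
  have h1 : ((M * A)ᴴ * M).trace = star ((Mᴴ * (M * A)).trace) := by
    rw [← Matrix.trace_conjTranspose]
    simp [Matrix.conjTranspose_mul, Matrix.mul_assoc]
  have h2 : (Mᴴ * (M * A)).trace = (Mᴴ * M * A).trace := by rw [Matrix.mul_assoc]
  simp only [Complex.sub_re, Complex.add_re, h1, h2, Complex.star_def, Complex.conj_re]
  linarith [hMA]

lemma hsNorm_one_sq : hsNorm (1 : Matrix (Fin d) (Fin d) ℂ) ^ 2 = d := by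
  rw [hsNorm_sq]
  have : ∀ i : Fin d, ∑ j, ‖(1 : Matrix (Fin d) (Fin d) ℂ) i j‖ ^ 2 = 1 := by
    intro i
    rw [Finset.sum_eq_single i]
    · simp [Matrix.one_apply_eq]
    · intro j _ hj; simp [Matrix.one_apply_ne' hj]
    · simp
  simp [this]

lemma entries_zero_of_hsNorm_sq_zero {M : Matrix (Fin d) (Fin d) ℂ}
    (h : hsNorm M ^ 2 = 0) (i j : Fin d) : M i j = 0 := by
  rw [hsNorm_sq] at h
  have h1 : ∀ i ∈ (Finset.univ : Finset (Fin d)),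
      (0:ℝ) ≤ ∑ j, ‖M i j‖ ^ 2 := fun i _ => by positivity
  have h2 := (Finset.sum_eq_zero_iff_of_nonneg h1).1 h i (Finset.mem_univ i)
  have h3 := (Finset.sum_eq_zero_iff_of_nonneg (fun j _ => by positivity)).1 h2 j (Finset.mem_univ j)
  have := pow_eq_zero_iff (n := 2) (by norm_num) |>.1 h3
  simpa using this

lemma unitary_entry_abs_le (U : Matrix.unitaryGroup (Fin d) ℂ) (k i : Fin d) :
    ‖(U : Matrix (Fin d) (Fin d) ℂ) k i‖ ≤ 1 := by
  have h := Matrix.UnitaryGroup.star_mul_self U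
  have h2 := congrArg (fun A : Matrix (Fin d) (Fin d) ℂ => (A i i).re) h
  simp only [Matrix.mul_apply, Matrix.star_apply, Complex.star_def,
    ← Complex.normSq_eq_conj_mul_self, Matrix.one_apply_eq, Complex.one_re,
    Complex.re_sum, Complex.ofReal_re] at h2
  have hle : Complex.normSq ((U : Matrix (Fin d) (Fin d) ℂ) k i) ≤ 1 := by
    rw [← h2]
    exact Finset.single_le_sum (f := fun j => Complex.normSq ((U : Matrix (Fin d) (Fin d) ℂ) j i))
      (fun j _ => Complex.normSq_nonneg _) (Finset.mem_univ k)
  rw [Complex.norm_def]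
  calc Real.sqrt (Complex.normSq _) ≤ Real.sqrt 1 := Real.sqrt_le_sqrt hle
  _ = 1 := Real.sqrt_one

section Grp
variable {G : Type*} [Group G] [TopologicalSpace G] [IsTopologicalGroup G] [CompactSpace G]
  [T2Space G] [MeasurableSpace G] [BorelSpace G] (μ : Measure G) [IsProbabilityMeasure μ]
  [μ.IsMulLeftInvariant]

lemma integrable_mul_conj_entry {f : G → ℂ} (hf : Integrable f μ)
    (ξ : G →* Matrix.unitaryGroup (Fin d) ℂ)
    (hξ : Continuous fun x => ((ξ x : Matrix (Fin d) (Fin d) ℂ))) (j i : Fin d) :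
    Integrable (fun x => f x * conj ((ξ x : Matrix (Fin d) (Fin d) ℂ) j i)) μ := by
  have hc : Continuous fun x => conj ((ξ x : Matrix (Fin d) (Fin d) ℂ) j i) := by
    exact Complex.continuous_conj.comp ((continuous_apply i).comp ((continuous_apply j).comp hξ))
  have : Integrable (fun x => conj ((ξ x : Matrix (Fin d) (Fin d) ℂ) j i) * f x) μ := by
    refine hf.bdd_mul (c := 1) hc.aestronglyMeasurable (Filter.Eventually.of_forall fun x => ?_)
    rw [RCLike.norm_conj]
    simpa using unitary_entry_abs_le (ξ x) j i
  simpa [mul_comm] using this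

lemma fourierCoef_translate {f : G → ℂ} (hf : Integrable f μ)
    (ξ : G →* Matrix.unitaryGroup (Fin d) ℂ)
    (hξ : Continuous fun x => ((ξ x : Matrix (Fin d) (Fin d) ℂ))) (h : G) :
    fourierCoef μ (fun x => f (h * x)) ξ = fourierCoef μ f ξ * (ξ h : Matrix (Fin d) (Fin d) ℂ) := by
  ext i j
  show (∫ x, f (h * x) * conj ((ξ x : Matrix (Fin d) (Fin d) ℂ) j i) ∂μ)
      = ∑ k, fourierCoef μ f ξ i k * (ξ h : Matrix (Fin d) (Fin d) ℂ) k j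
  have key : ∀ x : G, f (h * x) * conj ((ξ x : Matrix (Fin d) (Fin d) ℂ) j i)
      = (fun y => f y * conj ((ξ (h⁻¹ * y) : Matrix (Fin d) (Fin d) ℂ) j i)) (h * x) := by
    intro x
    simp [mul_assoc]
  rw [integral_congr_ae (Filter.EventuallyEq.of_eq (funext key))]
  rw [integral_mul_left_eq_self (fun y => f y * conj ((ξ (h⁻¹ * y) : Matrix (Fin d) (Fin d) ℂ) j i)) h]
  have expand : ∀ y : G, f y * conj ((ξ (h⁻¹ * y) : Matrix (Fin d) (Fin d) ℂ) j i)
      = ∑ k, (ξ h : Matrix (Fin d) (Fin d) ℂ) k j * (f y * conj ((ξ y : Matrix (Fin d) (Fin d) ℂ) k i)) := by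
    intro y
    have : ((ξ (h⁻¹ * y) : Matrix (Fin d) (Fin d) ℂ)) = star ((ξ h : Matrix (Fin d) (Fin d) ℂ)) * (ξ y : Matrix (Fin d) (Fin d) ℂ) := by
      rw [map_mul, map_inv]
      simp [Matrix.UnitaryGroup.inv_val]
    rw [this, Matrix.mul_apply]
    rw [map_sum, Finset.mul_sum]
    refine Finset.sum_congr rfl fun k _ => ?_
    rw [Matrix.star_apply, Complex.star_def]
    simp only [map_mul, Complex.conj_conj]
    ring
  rw [integral_congr_ae (Filter.EventuallyEq.of_eq (funext expand))]
  rw [integral_finset_sum _ (fun k _ => (integrable_mul_conj_entry μ hf ξ hξ k i).const_mul _)]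
  refine Finset.sum_congr rfl fun k _ => ?_
  rw [integral_const_mul]
  show (ξ h : Matrix (Fin d) (Fin d) ℂ) k j * fourierCoef μ f ξ i k = _
  ring

lemma fourierCoef_sub {f g : G → ℂ}
    (ξ : G →* Matrix.unitaryGroup (Fin d) ℂ)
    (hξ : Continuous fun x => ((ξ x : Matrix (Fin d) (Fin d) ℂ)))
    (hf : Integrable f μ) (hg : Integrable g μ) :
    fourierCoef μ (fun x => f x - g x) ξ = fourierCoef μ f ξ - fourierCoef μ g ξ := by
  ext i j
  show (∫ x, (f x - g x) * conj ((ξ x : Matrix (Fin d) (Fin d) ℂ) j i) ∂μ) = _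
  have : ∀ x : G, (f x - g x) * conj ((ξ x : Matrix (Fin d) (Fin d) ℂ) j i)
      = f x * conj ((ξ x : Matrix (Fin d) (Fin d) ℂ) j i) - g x * conj ((ξ x : Matrix (Fin d) (Fin d) ℂ) j i) := by
    intro x; ring
  rw [integral_congr_ae (Filter.EventuallyEq.of_eq (funext this)),
    integral_sub (integrable_mul_conj_entry μ hf ξ hξ j i) (integrable_mul_conj_entry μ hg ξ hξ j i)]
  rfl

lemma continuous_trace_term (M : Matrix (Fin d) (Fin d) ℂ)
    {ξ : G →* Matrix.unitaryGroup (Fin d) ℂ}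
    (hξ : Continuous fun x => ((ξ x : Matrix (Fin d) (Fin d) ℂ))) :
    Continuous fun h : G => (Matrix.trace (Mᴴ * M * (ξ h : Matrix (Fin d) (Fin d) ℂ))).re := by
  have h1 : Continuous fun h : G => Mᴴ * M * (ξ h : Matrix (Fin d) (Fin d) ℂ) :=
    Continuous.matrix_mul continuous_const hξ
  exact Complex.continuous_re.comp h1.matrix_trace

lemma continuous_hs_term (M : Matrix (Fin d) (Fin d) ℂ)
    {ξ : G →* Matrix.unitaryGroup (Fin d) ℂ}
    (hξ : Continuous fun x => ((ξ x : Matrix (Fin d) (Fin d) ℂ))) :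
    Continuous fun h : G => hsNorm (M * ((ξ h : Matrix (Fin d) (Fin d) ℂ) - 1)) ^ 2 := by
  have : (fun h : G => hsNorm (M * ((ξ h : Matrix (Fin d) (Fin d) ℂ) - 1)) ^ 2)
      = fun h : G => 2 * hsNorm M ^ 2
          - 2 * (Matrix.trace (Mᴴ * M * (ξ h : Matrix (Fin d) (Fin d) ℂ))).re := by
    funext h; exact hsNorm_sq_mul_sub_one M (ξ h)
  rw [this]
  exact continuous_const.sub (continuous_const.mul (continuous_trace_term M hξ))

lemma setIntegral_hs (M : Matrix (Fin d) (Fin d) ℂ)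
    {ξ : G →* Matrix.unitaryGroup (Fin d) ℂ}
    (hξ : Continuous fun x => ((ξ x : Matrix (Fin d) (Fin d) ℂ)))
    {s : Set G} (hs : MeasurableSet s) (hcomp : IsCompact s)
    (h0 : ∀ k l, (∫ x in s, ((ξ x : Matrix (Fin d) (Fin d) ℂ) k l) ∂μ) = 0) :
    ∫ h in s, hsNorm (M * ((ξ h : Matrix (Fin d) (Fin d) ℂ) - 1)) ^ 2 ∂μ
      = 2 * (μ s).toReal * hsNorm M ^ 2 := by
  have hcongr : ∀ h : G, hsNorm (M * ((ξ h : Matrix (Fin d) (Fin d) ℂ) - 1)) ^ 2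
      = 2 * hsNorm M ^ 2 - 2 * (Matrix.trace (Mᴴ * M * (ξ h : Matrix (Fin d) (Fin d) ℂ))).re :=
    fun h => hsNorm_sq_mul_sub_one M (ξ h)
  rw [integral_congr_ae (Filter.EventuallyEq.of_eq (funext hcongr))]
  have hint1 : IntegrableOn (fun _ : G => 2 * hsNorm M ^ 2) s μ :=
    integrableOn_const (measure_lt_top μ s).ne
  have hint2 : IntegrableOn
      (fun h : G => 2 * (Matrix.trace (Mᴴ * M * (ξ h : Matrix (Fin d) (Fin d) ℂ))).re) s μ :=
    ContinuousOn.integrableOn_compact hcomp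
      ((continuous_const.mul (continuous_trace_term M hξ)).continuousOn)
  rw [integral_sub hint1 hint2]
  have htr : (∫ h in s, Matrix.trace (Mᴴ * M * (ξ h : Matrix (Fin d) (Fin d) ℂ)) ∂μ) = 0 := by
    have hexp : ∀ h : G, Matrix.trace (Mᴴ * M * (ξ h : Matrix (Fin d) (Fin d) ℂ))
        = ∑ l, ∑ k, (Mᴴ * M) l k * (ξ h : Matrix (Fin d) (Fin d) ℂ) k l := by
      intro h
      rw [Matrix.trace]
      refine Finset.sum_congr rfl fun l _ => ?_
      rw [Matrix.diag_apply, Matrix.mul_apply]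
    rw [integral_congr_ae (Filter.EventuallyEq.of_eq (funext hexp))]
    have hintlk : ∀ (l k : Fin d), IntegrableOn
        (fun h : G => (Mᴴ * M) l k * (ξ h : Matrix (Fin d) (Fin d) ℂ) k l) s μ := by
      intro l k
      refine ContinuousOn.integrableOn_compact hcomp (Continuous.continuousOn ?_)
      exact continuous_const.mul (((continuous_apply l).comp ((continuous_apply k).comp hξ)))
    rw [integral_finset_sum _ (fun l _ => integrable_finset_sum _ (fun k _ => hintlk l k))]
    refine Finset.sum_eq_zero fun l _ => ?_
    rw [integral_finset_sum _ (fun k _ => hintlk l k)]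
    refine Finset.sum_eq_zero fun k _ => ?_
    rw [integral_const_mul, h0 k l, mul_zero]
  have hre : (∫ h in s, (Matrix.trace (Mᴴ * M * (ξ h : Matrix (Fin d) (Fin d) ℂ))).re ∂μ) = 0 := by
    have hint3 : Integrable (fun h : G => Matrix.trace (Mᴴ * M * (ξ h : Matrix (Fin d) (Fin d) ℂ)))
        (μ.restrict s) := by
      refine ContinuousOn.integrableOn_compact hcomp (Continuous.continuousOn ?_)
      exact (Continuous.matrix_mul continuous_const hξ).matrix_trace
    have h4 := integral_re hint3
    simp only [RCLike.re_to_complex] at h4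
    rw [h4, htr, Complex.zero_re]
  have e2 : (∫ h in s, 2 * (Matrix.trace (Mᴴ * M * (ξ h : Matrix (Fin d) (Fin d) ℂ))).re ∂μ) = 0 := by
    rw [integral_const_mul, hre, mul_zero]
  rw [e2, sub_zero, setIntegral_const, smul_eq_mul, measureReal_def]
  ring

lemma integral_abs_sq_eq {g : G → ℂ} (hg : MemLp g 2 μ) :
    (∫ x, ‖g x‖ ^ 2 ∂μ) = ((eLpNorm g 2 μ).toReal) ^ 2 := by
  have h := hg.eLpNorm_eq_integral_rpow_norm (by norm_num) (by norm_num)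
  have hnn : (0:ℝ) ≤ (∫ a, ‖g a‖ ^ ((2:ENNReal)).toReal ∂μ) ^ ((2:ENNReal)).toReal⁻¹ := by
    positivity
  rw [h, ENNReal.toReal_ofReal hnn]
  have h2 : ((2:ENNReal)).toReal = (2:ℝ) := by norm_num
  rw [h2]
  have hpos : (0:ℝ) ≤ ∫ a, ‖g a‖ ^ (2:ℝ) ∂μ := by
    refine integral_nonneg fun a => ?_
    positivity
  rw [← Real.rpow_natCast ((∫ a, ‖g a‖ ^ (2:ℝ) ∂μ) ^ (2:ℝ)⁻¹) 2, ← Real.rpow_mul hpos]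
  norm_num

end Grp
end VilenkinAux

open VilenkinAux

lemma summable_planch {G : Type*} [Group G] [TopologicalSpace G] [IsTopologicalGroup G]
    [CompactSpace G] [TotallyDisconnectedSpace G] [MeasurableSpace G] [BorelSpace G]
    (V : VilenkinData G) (μ : Measure G) [μ.IsHaarMeasure] [IsProbabilityMeasure μ]
    (D : DualData G V μ) (g : G → ℂ) (hg : MemLp g 2 μ) :
    Summable (fun i => (D.dim i : ℝ) * hsNorm (fourierCoef μ g (D.rep i)) ^ 2) := by
  by_contra hs
  have h0 : (∫ x, ‖g x‖ ^ 2 ∂μ) = 0 := by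
    rw [D.plancherel g hg, tsum_eq_zero_of_not_summable hs]
  have hint : Integrable (fun x => ‖g x‖ ^ 2) μ := by
    have h1 := hg.integrable_norm_rpow (by norm_num) (by norm_num)
    refine h1.congr (Filter.EventuallyEq.of_eq (funext fun x => ?_))
    norm_num
  have hzero : (fun x => ‖g x‖ ^ 2) =ᵐ[μ] 0 :=
    (integral_eq_zero_iff_of_nonneg (fun x => by positivity) hint).1 h0
  have hgz : g =ᵐ[μ] 0 := by
    refine hzero.mono fun x hx => ?_
    simp only [Pi.zero_apply] at hx ⊢
    have h2 := pow_eq_zero_iff (n := 2) (by norm_num) |>.1 hx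
    simpa using h2
  have hcoef : ∀ i, fourierCoef μ g (D.rep i) = 0 := by
    intro i
    refine Matrix.ext fun j k => ?_
    show (∫ x, g x * (starRingEnd ℂ) ((D.rep i x : Matrix _ _ ℂ) k j) ∂μ) = (0 : Matrix _ _ ℂ) j k
    rw [Matrix.zero_apply]
    rw [integral_eq_zero_of_ae]
    exact hgz.mono fun x hx => by simp [hx]
  apply hs
  have hfun : (fun i => (D.dim i : ℝ) * hsNorm (fourierCoef μ g (D.rep i)) ^ 2)
      = fun _ => (0:ℝ) := by
    funext i
    rw [hcoef i]
    have : hsNorm (0 : Matrix (Fin (D.dim i)) (Fin (D.dim i)) ℂ) = 0 := by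
      simp [hsNorm]
    rw [this]
    ring
  rw [hfun]
  exact summable_zero

/-- **Lower bound for the modulus of continuity.** For `f ∈ L²(μ_G)` on a compact Vilenkin
group, `(∑_{⟨ξ⟩ > |G/G_n|} d_ξ ‖f̂(ξ)‖²_HS)^{1/2} ≤ (1/√2) ω₂(f,𝒢,n)`, where
`ω₂(f,𝒢,n) := sup_{h ∈ G_n} ‖f(h·) - f‖_{L²}`. -/
theorem sqrt_tail_le_modulus_of_continuity
    {G : Type*} [Group G] [TopologicalSpace G] [IsTopologicalGroup G] [CompactSpace G]
    [TotallyDisconnectedSpace G] [MeasurableSpace G] [BorelSpace G]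
    (V : VilenkinData G) (μ : Measure G) [μ.IsHaarMeasure] [IsProbabilityMeasure μ]
    (D : DualData G V μ) (f : G → ℂ) (hf : MemLp f 2 μ) (n : ℕ) :
    Real.sqrt (∑' i : {i // n < D.lvl i},
        (D.dim i.1 : ℝ) * hsNorm (fourierCoef μ f (D.rep i.1)) ^ 2) ≤
      (1 / Real.sqrt 2) *
        ⨆ h : V.seq n, (eLpNorm (fun x => f (↑h * x) - f x) 2 μ).toReal := by
  classical
  set Gn : Set G := (V.seq n : Set G) with hGnDef
  have hGnMeas : MeasurableSet Gn := (V.isOpen n).measurableSet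
  have hGnComp : IsCompact Gn :=
    ((V.seq n).isClosed_of_isOpen (V.isOpen n)).isCompact
  have hμpos : 0 < μ Gn := (V.isOpen n).measure_pos μ ⟨1, (V.seq n).one_mem⟩
  set c : ℝ := (μ Gn).toReal with hcDef
  have hc_pos : 0 < c := ENNReal.toReal_pos hμpos.ne' (measure_lt_top μ Gn).ne
  -- Step A : c⁻¹ ≤ index
  haveI : (V.seq n).FiniteIndex := ⟨V.index_ne_zero n⟩
  haveI : Finite (G ⧸ V.seq n) := Subgroup.finite_quotient_of_finiteIndex
  have hcover : (Set.univ : Set G) ⊆ ⋃ q : G ⧸ V.seq n, (Quotient.out q) • Gn := by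
    intro x _
    refine Set.mem_iUnion.2 ⟨QuotientGroup.mk x, ?_⟩
    rw [Set.mem_smul_set_iff_inv_smul_mem]
    have h1 : (QuotientGroup.mk (Quotient.out (QuotientGroup.mk x : G ⧸ V.seq n)) : G ⧸ V.seq n)
        = QuotientGroup.mk x := Quotient.out_eq _
    have h2 := (QuotientGroup.eq (s := V.seq n)).1 h1
    simpa [hGnDef] using h2
  have hA : 1 ≤ ((V.seq n).index : ℝ) * c := by
    have h1 : (μ Set.univ : ENNReal) ≤ ((V.seq n).index : ENNReal) * μ Gn := by
      calc μ Set.univ ≤ μ (⋃ q : G ⧸ V.seq n, (Quotient.out q) • Gn) := measure_mono hcover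
      _ ≤ ∑' q : G ⧸ V.seq n, μ ((Quotient.out q) • Gn) := measure_iUnion_le _
      _ = ∑' _ : G ⧸ V.seq n, μ Gn := tsum_congr fun q => measure_smul μ (Quotient.out q) Gn
      _ = (Nat.card (G ⧸ V.seq n)) • μ Gn := by
          haveI := Fintype.ofFinite (G ⧸ V.seq n)
          rw [tsum_fintype, Finset.sum_const, Finset.card_univ, Nat.card_eq_fintype_card]
      _ = ((V.seq n).index : ENNReal) * μ Gn := by
          rw [Subgroup.index_eq_card, nsmul_eq_mul]
    rw [measure_univ] at h1
    have hne : ((V.seq n).index : ENNReal) * μ Gn ≠ ⊤ :=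
      ENNReal.mul_ne_top (ENNReal.natCast_ne_top _) (measure_lt_top μ Gn).ne
    have h2 := ENNReal.toReal_mono hne h1
    rw [ENNReal.toReal_one, ENNReal.toReal_mul, ENNReal.toReal_natCast] at h2
    exact h2
  have hcinv : c⁻¹ ≤ ((V.seq n).index : ℝ) := by
    rw [← one_div]
    exact (div_le_iff₀ hc_pos).mpr (by linarith)
  -- Step B : vanishing of the averaged representations beyond level n
  set e : G → ℂ := Gn.indicator (fun _ => ((c⁻¹ : ℝ) : ℂ)) with heDef
  have he2 : MemLp e 2 μ := MemLp.indicator hGnMeas (memLp_const _)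
  have heint : (∫ x, ‖e x‖ ^ 2 ∂μ) = c⁻¹ := by
    have hfun : (fun x => ‖e x‖ ^ 2)
        = Gn.indicator (fun _ => (c⁻¹) ^ 2) := by
      funext x
      by_cases hx : x ∈ Gn
      · simp [heDef, Set.indicator_of_mem hx, Complex.norm_real, Real.norm_eq_abs,
          abs_of_nonneg (inv_nonneg.2 hc_pos.le)]
      · simp [heDef, Set.indicator_of_notMem hx]
    rw [hfun, integral_indicator hGnMeas, setIntegral_const, smul_eq_mul, measureReal_def, ← hcDef]
    field_simp
  have hcoefe : ∀ i : D.ι, ∀ j k, fourierCoef μ e (D.rep i) j k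
      = ((c⁻¹ : ℝ) : ℂ) * ∫ x in Gn, conj ((D.rep i x : Matrix _ _ ℂ) k j) ∂μ := by
    intro i j k
    show (∫ x, e x * conj ((D.rep i x : Matrix _ _ ℂ) k j) ∂μ) = _
    have hfun : (fun x => e x * conj ((D.rep i x : Matrix _ _ ℂ) k j))
        = Gn.indicator (fun x => ((c⁻¹ : ℝ) : ℂ) * conj ((D.rep i x : Matrix _ _ ℂ) k j)) := by
      funext x
      by_cases hx : x ∈ Gn
      · simp [heDef, Set.indicator_of_mem hx]
      · simp [heDef, Set.indicator_of_notMem hx]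
    rw [hfun, integral_indicator hGnMeas, integral_const_mul]
  have hlow : ∀ i : D.ι, D.lvl i ≤ n → fourierCoef μ e (D.rep i) = 1 := by
    intro i hi
    have hsub : Gn ⊆ (V.seq (D.lvl i) : Set G) := by
      rw [hGnDef]
      exact SetLike.coe_subset_coe.2 (V.strictAnti.antitone hi)
    refine Matrix.ext fun j k => ?_
    rw [hcoefe i j k]
    have hconst : ∀ x ∈ Gn, conj ((D.rep i x : Matrix _ _ ℂ) k j)
        = conj (((1 : Matrix.unitaryGroup (Fin (D.dim i)) ℂ) : Matrix _ _ ℂ) k j) := by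
      intro x hx
      rw [D.lvl_triv i x (hsub hx)]
    rw [setIntegral_congr_fun hGnMeas hconst, setIntegral_const, Complex.real_smul, measureReal_def, ← hcDef]
    have hone : ((1 : Matrix.unitaryGroup (Fin (D.dim i)) ℂ) : Matrix (Fin (D.dim i)) (Fin (D.dim i)) ℂ) = 1 :=
      Matrix.UnitaryGroup.one_val
    rw [hone]
    by_cases hjk : j = k
    · subst hjk
      simp [Matrix.one_apply_eq]
      exact inv_mul_cancel₀ (Complex.ofReal_ne_zero.2 hc_pos.ne')
    · simp [Matrix.one_apply_ne hjk, Matrix.one_apply_ne' hjk]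
  have hsum_e := summable_planch V μ D e he2
  have htot : c⁻¹ = ∑' i, (D.dim i : ℝ) * hsNorm (fourierCoef μ e (D.rep i)) ^ 2 := by
    rw [← D.plancherel e he2, heint]
  set S : Set D.ι := {i | D.lvl i ≤ n} with hSdef
  have hlowsum : ∑' i : S, (D.dim i.1 : ℝ) * hsNorm (fourierCoef μ e (D.rep i.1)) ^ 2
      = ((V.seq n).index : ℝ) := by
    have hcongr : ∀ i : S, (D.dim i.1 : ℝ) * hsNorm (fourierCoef μ e (D.rep i.1)) ^ 2
        = (D.dim i.1 : ℝ) ^ 2 := by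
      rintro ⟨i, hi⟩
      rw [hlow i hi, hsNorm_one_sq]
      ring
    rw [tsum_congr hcongr]
    exact (D.count n).tsum_eq
  have hsplit2 : (∑' i : ↑S, (D.dim i.1 : ℝ) * hsNorm (fourierCoef μ e (D.rep i.1)) ^ 2)
      + (∑' i : ↑Sᶜ, (D.dim i.1 : ℝ) * hsNorm (fourierCoef μ e (D.rep i.1)) ^ 2)
      = ∑' i, (D.dim i : ℝ) * hsNorm (fourierCoef μ e (D.rep i)) ^ 2 :=
    Summable.tsum_add_tsum_compl (hsum_e.subtype S) (hsum_e.subtype Sᶜ)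
  have htail0 : ∑' i : ↑Sᶜ, (D.dim i.1 : ℝ) * hsNorm (fourierCoef μ e (D.rep i.1)) ^ 2 = 0 := by
    have h2 : (0:ℝ) ≤ ∑' i : ↑Sᶜ, (D.dim i.1 : ℝ) * hsNorm (fourierCoef μ e (D.rep i.1)) ^ 2 :=
      tsum_nonneg fun i => mul_nonneg (Nat.cast_nonneg _) (sq_nonneg _)
    have h3 := hsplit2
    rw [hlowsum, ← htot] at h3
    linarith [hcinv]
  have hzero : ∀ i : D.ι, n < D.lvl i → fourierCoef μ e (D.rep i) = 0 := by
    intro i hi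
    have hiS : i ∈ Sᶜ := by
      simp only [hSdef, Set.mem_compl_iff, Set.mem_setOf_eq, not_le]
      exact hi
    have hFle : (D.dim i : ℝ) * hsNorm (fourierCoef μ e (D.rep i)) ^ 2 ≤ 0 := by
      have h1 := Summable.le_tsum (hsum_e.subtype Sᶜ) (⟨i, hiS⟩ : ↑Sᶜ)
        (fun j _ => mul_nonneg (Nat.cast_nonneg _) (sq_nonneg _))
      exact h1.trans_eq htail0
    have hF0 : (D.dim i : ℝ) * hsNorm (fourierCoef μ e (D.rep i)) ^ 2 = 0 :=
      le_antisymm hFle (by positivity)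
    have hd : (0:ℝ) < (D.dim i : ℝ) := by exact_mod_cast D.dim_pos i
    have hhs : hsNorm (fourierCoef μ e (D.rep i)) ^ 2 = 0 := by
      rcases mul_eq_zero.1 hF0 with h | h
      · exact absurd h hd.ne'
      · exact h
    refine Matrix.ext fun j k => ?_
    rw [Matrix.zero_apply]
    exact entries_zero_of_hsNorm_sq_zero hhs j k
  have hP : ∀ i : D.ι, n < D.lvl i → ∀ k j,
      (∫ x in Gn, (((D.rep i) x : Matrix (Fin (D.dim i)) (Fin (D.dim i)) ℂ) k j) ∂μ) = 0 := by
    intro i hi k j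
    have h1 : fourierCoef μ e (D.rep i) j k = 0 := by rw [hzero i hi, Matrix.zero_apply]
    rw [hcoefe i j k] at h1
    have hcne : ((c⁻¹ : ℝ) : ℂ) ≠ 0 := by
      simp only [ne_eq, Complex.ofReal_eq_zero]
      exact inv_ne_zero hc_pos.ne'
    have h2 : (∫ x in Gn, conj (((D.rep i) x : Matrix (Fin (D.dim i)) (Fin (D.dim i)) ℂ) k j) ∂μ) = 0 :=
      (mul_eq_zero.1 h1).resolve_left hcne
    rw [integral_conj] at h2
    have h3 := congrArg (starRingEnd ℂ) h2
    simpa using h3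
  -- Step C : modulus of continuity bound
  have hfint : Integrable f μ := hf.integrable one_le_two
  have htransMem : ∀ h : G, MemLp (fun x => f (h * x)) 2 μ := fun h =>
    hf.comp_measurePreserving (measurePreserving_mul_left μ h)
  have hgmem : ∀ h : G, MemLp (fun x => f (h * x) - f x) 2 μ := fun h =>
    (htransMem h).sub hf
  set ω : ℝ := ⨆ h : V.seq n, (eLpNorm (fun x => f (↑h * x) - f x) 2 μ).toReal with hωDef
  have hω0 : 0 ≤ ω := Real.iSup_nonneg fun h => ENNReal.toReal_nonneg
  have hBdd : BddAbove (Set.range fun h : V.seq n =>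
      (eLpNorm (fun x => f (↑h * x) - f x) 2 μ).toReal) := by
    refine ⟨(eLpNorm f 2 μ).toReal + (eLpNorm f 2 μ).toReal, ?_⟩
    rintro r ⟨h, rfl⟩
    have h1 : eLpNorm (fun x => f (↑h * x) - f x) 2 μ
        ≤ eLpNorm (fun x => f (↑h * x)) 2 μ + eLpNorm f 2 μ := by
      have := eLpNorm_sub_le (htransMem ↑h).aestronglyMeasurable hf.aestronglyMeasurable
        (one_le_two (α := ENNReal))
      exact this
    have h2 : eLpNorm (fun x => f (↑h * x)) 2 μ = eLpNorm f 2 μ :=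
      eLpNorm_comp_measurePreserving hf.aestronglyMeasurable (measurePreserving_mul_left μ ↑h)
    rw [h2] at h1
    have hne : eLpNorm f 2 μ + eLpNorm f 2 μ ≠ ⊤ :=
      ENNReal.add_ne_top.2 ⟨hf.eLpNorm_ne_top, hf.eLpNorm_ne_top⟩
    have h3 := ENNReal.toReal_mono hne h1
    rwa [ENNReal.toReal_add hf.eLpNorm_ne_top hf.eLpNorm_ne_top] at h3
  have hωb : ∀ h : V.seq n, (eLpNorm (fun x => f (↑h * x) - f x) 2 μ).toReal ≤ ω :=
    fun h => le_ciSup hBdd h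
  -- per finset bound
  have hTle : (∑' i : {i // n < D.lvl i},
      (D.dim i.1 : ℝ) * hsNorm (fourierCoef μ f (D.rep i.1)) ^ 2) ≤ ω ^ 2 / 2 := by
    refine Real.tsum_le_of_sum_le (fun i => by positivity) ?_
    intro s
    have key : 2 * c * (∑ i ∈ s, (D.dim i.1 : ℝ) * hsNorm (fourierCoef μ f (D.rep i.1)) ^ 2)
        ≤ c * ω ^ 2 := by
      have hper : ∀ i : {i // n < D.lvl i},
          (∫ h in Gn, hsNorm ((fourierCoef μ f (D.rep i.1))
              * ((D.rep i.1 h : Matrix _ _ ℂ) - 1)) ^ 2 ∂μ)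
            = 2 * c * hsNorm (fourierCoef μ f (D.rep i.1)) ^ 2 :=
        fun i => setIntegral_hs μ _ (D.rep_continuous i.1) hGnMeas hGnComp (hP i.1 i.2)
      have hswap : (∫ h in Gn, ∑ i ∈ s, (D.dim i.1 : ℝ)
              * hsNorm ((fourierCoef μ f (D.rep i.1)) * ((D.rep i.1 h : Matrix _ _ ℂ) - 1)) ^ 2 ∂μ)
          = ∑ i ∈ s, (D.dim i.1 : ℝ) * (2 * c * hsNorm (fourierCoef μ f (D.rep i.1)) ^ 2) := by
        rw [integral_finset_sum]
        · refine Finset.sum_congr rfl fun i _ => ?_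
          rw [integral_const_mul, hper i]
        · intro i _
          exact ContinuousOn.integrableOn_compact hGnComp
            ((continuous_const.mul (continuous_hs_term _ (D.rep_continuous i.1))).continuousOn)
      have hpt : ∀ h ∈ Gn, (∑ i ∈ s, (D.dim i.1 : ℝ)
          * hsNorm ((fourierCoef μ f (D.rep i.1)) * ((D.rep i.1 h : Matrix _ _ ℂ) - 1)) ^ 2)
            ≤ ω ^ 2 := by
        intro h hh
        have hcoefg : ∀ i : D.ι, fourierCoef μ (fun x => f (h * x) - f x) (D.rep i)
            = fourierCoef μ f (D.rep i) * ((D.rep i h : Matrix _ _ ℂ) - 1) := by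
          intro i
          rw [fourierCoef_sub μ _ (D.rep_continuous i) ((htransMem h).integrable one_le_two) hfint,
            fourierCoef_translate μ hfint _ (D.rep_continuous i) h, Matrix.mul_sub, Matrix.mul_one]
        have hsumg := summable_planch V μ D _ (hgmem h)
        have hplg : (∑' i : D.ι, (D.dim i : ℝ)
            * hsNorm (fourierCoef μ (fun x => f (h * x) - f x) (D.rep i)) ^ 2)
            = ((eLpNorm (fun x => f (h * x) - f x) 2 μ).toReal) ^ 2 := by
          rw [← D.plancherel _ (hgmem h), integral_abs_sq_eq μ (hgmem h)]
        have hemb : (∑ i ∈ s, (D.dim i.1 : ℝ)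
            * hsNorm ((fourierCoef μ f (D.rep i.1)) * ((D.rep i.1 h : Matrix _ _ ℂ) - 1)) ^ 2)
            = ∑ i ∈ s.map (Function.Embedding.subtype _), (D.dim i : ℝ)
              * hsNorm (fourierCoef μ (fun x => f (h * x) - f x) (D.rep i)) ^ 2 := by
          rw [Finset.sum_map]
          refine Finset.sum_congr rfl fun i _ => ?_
          rw [hcoefg]
          rfl
        rw [hemb]
        calc (∑ i ∈ s.map (Function.Embedding.subtype _), (D.dim i : ℝ)
              * hsNorm (fourierCoef μ (fun x => f (h * x) - f x) (D.rep i)) ^ 2)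
            ≤ ∑' i : D.ι, (D.dim i : ℝ)
              * hsNorm (fourierCoef μ (fun x => f (h * x) - f x) (D.rep i)) ^ 2 :=
              Summable.sum_le_tsum _ (fun i _ => by positivity) hsumg
        _ = ((eLpNorm (fun x => f (h * x) - f x) 2 μ).toReal) ^ 2 := hplg
        _ ≤ ω ^ 2 := by
            have := hωb ⟨h, hh⟩
            exact pow_le_pow_left₀ ENNReal.toReal_nonneg this 2
      have hLHSint : IntegrableOn (fun h : G => ∑ i ∈ s, (D.dim i.1 : ℝ)
          * hsNorm ((fourierCoef μ f (D.rep i.1)) * ((D.rep i.1 h : Matrix _ _ ℂ) - 1)) ^ 2) Gn μ :=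
        integrable_finset_sum _ fun i _ =>
          ContinuousOn.integrableOn_compact hGnComp
            ((continuous_const.mul (continuous_hs_term _ (D.rep_continuous i.1))).continuousOn)
      have hmono := setIntegral_mono_on hLHSint
        (integrableOn_const (measure_lt_top μ Gn).ne) hGnMeas hpt
      rw [hswap] at hmono
      rw [setIntegral_const, smul_eq_mul, measureReal_def, ← hcDef] at hmono
      calc 2 * c * (∑ i ∈ s, (D.dim i.1 : ℝ) * hsNorm (fourierCoef μ f (D.rep i.1)) ^ 2)
          = ∑ i ∈ s, (D.dim i.1 : ℝ) * (2 * c * hsNorm (fourierCoef μ f (D.rep i.1)) ^ 2) := by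
            rw [Finset.mul_sum]
            exact Finset.sum_congr rfl fun i _ => by ring
      _ ≤ c * ω ^ 2 := hmono
    nlinarith [key, hc_pos]
  calc Real.sqrt (∑' i : {i // n < D.lvl i},
        (D.dim i.1 : ℝ) * hsNorm (fourierCoef μ f (D.rep i.1)) ^ 2)
      ≤ Real.sqrt (ω ^ 2 / 2) := Real.sqrt_le_sqrt hTle
  _ = ω / Real.sqrt 2 := by
      rw [Real.sqrt_div' _ (by norm_num : (0:ℝ) ≤ 2), Real.sqrt_sq hω0]
  _ = (1 / Real.sqrt 2) * ω := by ring

end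
end

section
/- The constant $1/\sqrt{2}$ in the inequality $\big(\sum_{\langle \xi \rangle_{\mathscr{G}} > |G/G_n|} d_\xi \|\widehat{f}(\xi)\|_{HS}^2\big)^{1/2} \leq \frac{1}{\sqrt{2}}\omega_2(f,\mathscr{G},n)$ is sharp: for a compact Vilenkin group $G$ with subgroup sequence $\{G_n\}$, taking $f = \mathbb{1}_{G_m}$ with $m > n$ gives $\omega_2(\mathbb{1}_{G_m}, \mathscr{G}, n) = \sqrt{2\mu_G(G_m)}$ and $\sum_{\langle \xi \rangle_{\mathscr{G}} > |G/G_n|} d_\xi \|\widehat{\mathbb{1}}_{G_m}(\xi)\|_{HS}^2 = \mu_G(G_m)\big(1 - \frac{|G/G_n|}{|G/G_m|}\big)$, so the ratio of the left side to $\frac{1}{\sqrt{2}}\omega_2$ equals $\sqrt{1 - |G/G_n|/|G/G_m|} \to 1$ as $m \to \infty$. -/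
open MeasureTheory Filter Asymptotics

noncomputable section

section AuxLemmas
open Classical
open scoped ENNReal
lemma hsNorm_real_smul_one {n : ℕ} (r : ℝ) (hr : 0 ≤ r) :
    hsNorm ((r : ℂ) • (1 : Matrix (Fin n) (Fin n) ℂ)) ^ 2 = n * r ^ 2 := by
  rw [hsNorm, Real.sq_sqrt (by positivity)]
  simp [Matrix.smul_apply, Matrix.one_apply, apply_ite norm, Finset.sum_ite_eq,
    Complex.norm_real, abs_of_nonneg hr]

lemma fourierCoef_indicator_triv {G : Type*} [Group G] [TopologicalSpace G]
    [MeasurableSpace G] (μ : Measure G) {n : ℕ} (ξ : G →* Matrix.unitaryGroup (Fin n) ℂ)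
    (H : Subgroup G) (hS : MeasurableSet (H : Set G)) (htriv : ∀ x ∈ H, ξ x = 1) :
    fourierCoef μ (fun x => if x ∈ H then (1 : ℂ) else 0) ξ =
      (((μ (H : Set G)).toReal : ℂ)) • (1 : Matrix (Fin n) (Fin n) ℂ) := by
  ext i j
  show (∫ x, (if x ∈ H then (1:ℂ) else 0) * (starRingEnd ℂ) ((ξ x : Matrix (Fin n) (Fin n) ℂ) j i) ∂μ) = _
  have : (fun x => (if x ∈ H then (1:ℂ) else 0) * (starRingEnd ℂ) ((ξ x : Matrix (Fin n) (Fin n) ℂ) j i))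
      = (H : Set G).indicator (fun _ => if i = j then (1:ℂ) else 0) := by
    funext x
    by_cases hx : x ∈ H
    · have h1 := htriv x hx
      simp [hx, h1, Matrix.one_apply, eq_comm, apply_ite (starRingEnd ℂ), Set.indicator_apply]
    · simp [hx, Set.indicator_apply]
  rw [this, integral_indicator_const _ hS]
  simp [Matrix.smul_apply, Matrix.one_apply, mul_comm, measureReal_def]

lemma meas_subgroup_mul_index {G : Type*} [Group G] [TopologicalSpace G] [IsTopologicalGroup G]
    [MeasurableSpace G] [BorelSpace G] (μ : Measure G) [μ.IsMulLeftInvariant]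
    [IsProbabilityMeasure μ] (H : Subgroup G) (hH : IsOpen (H : Set G)) (hi : H.index ≠ 0) :
    (H.index : ℝ≥0∞) * μ (H : Set G) = 1 := by
  have hfin : Finite (G ⧸ H) := (Nat.card_ne_zero.mp hi).2
  haveI : Fintype (G ⧸ H) := Fintype.ofFinite _
  have hcoset : ∀ q : G ⧸ H, (QuotientGroup.mk ⁻¹' {q} : Set G) =
      (fun x => q.out⁻¹ * x) ⁻¹' (H : Set G) := by
    intro q
    ext x
    simp only [Set.mem_preimage, Set.mem_singleton_iff, SetLike.mem_coe]
    rw [← q.out_eq, QuotientGroup.eq]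
    constructor
    · intro hx
      simpa using inv_mem hx
    · intro hx
      simpa using inv_mem hx
  have hmeas : ∀ q : G ⧸ H, MeasurableSet (QuotientGroup.mk ⁻¹' {q} : Set G) := by
    intro q
    rw [hcoset]
    exact ((hH.preimage (continuous_mul_left _))).measurableSet
  have hdisj : Pairwise (Function.onFun Disjoint fun q : G ⧸ H => (QuotientGroup.mk ⁻¹' {q} : Set G)) := by
    intro q q' hqq'
    exact Set.disjoint_left.mpr fun x hx hx' => hqq' (hx.symm.trans hx')
  have huniv : (Set.univ : Set G) = ⋃ q : G ⧸ H, (QuotientGroup.mk ⁻¹' {q} : Set G) := by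
    ext x; simp
  have h1 : (1 : ℝ≥0∞) = ∑ q : G ⧸ H, μ (QuotientGroup.mk ⁻¹' {q} : Set G) := by
    rw [← measure_univ (μ := μ), huniv, measure_iUnion hdisj hmeas, tsum_fintype]
  have h2 : ∀ q : G ⧸ H, μ (QuotientGroup.mk ⁻¹' {q} : Set G) = μ (H : Set G) := by
    intro q; rw [hcoset]; exact measure_preimage_mul μ _ _
  rw [h1]
  simp only [h2, Finset.sum_const, Finset.card_univ, nsmul_eq_mul]
  congr 1
  rw [Subgroup.index, Nat.card_eq_fintype_card]

lemma elp_comp {G : Type*} [Group G] [TopologicalSpace G] [IsTopologicalGroup G]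
    [MeasurableSpace G] [BorelSpace G] (μ : Measure G) [μ.IsMulLeftInvariant]
    [IsProbabilityMeasure μ] (H : Subgroup G) (hH : IsOpen (H : Set G)) (h : G)
    (hh : h ∉ H) :
    (eLpNorm (fun x => (if h * x ∈ H then (1 : ℂ) else 0) -
        (if x ∈ H then (1 : ℂ) else 0)) 2 μ).toReal =
      Real.sqrt (2 * (μ (H : Set G)).toReal) := by
  set S : Set G := ((fun x => h * x) ⁻¹' (H : Set G)) ∪ (H : Set G) with hSdef
  have hdisj : Disjoint ((fun x => h * x) ⁻¹' (H : Set G)) (H : Set G) := by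
    rw [Set.disjoint_left]
    intro x hx hx'
    exact hh (by simpa using mul_mem (hx : h * x ∈ H) (inv_mem (hx' : x ∈ H)))
  have hnorm : ∀ x, ‖(if h * x ∈ H then (1 : ℂ) else 0) - (if x ∈ H then (1 : ℂ) else 0)‖
      = ‖S.indicator (fun _ => (1 : ℂ)) x‖ := by
    intro x
    by_cases h1 : h * x ∈ H <;> by_cases h2 : x ∈ H
    · exact absurd (by simpa using mul_mem h1 (inv_mem h2)) hh
    · simp [S, h1, h2, Set.indicator_apply]
    · simp [S, h1, h2, Set.indicator_apply]
    · simp [S, h1, h2, Set.indicator_apply]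
  have key : eLpNorm (fun x => (if h * x ∈ H then (1 : ℂ) else 0) -
      (if x ∈ H then (1 : ℂ) else 0)) 2 μ = eLpNorm (S.indicator (fun _ => (1:ℂ))) 2 μ :=
    eLpNorm_congr_norm_ae (Filter.Eventually.of_forall hnorm)
  have hSmeas : MeasurableSet S :=
    ((hH.preimage (continuous_mul_left h)).union hH).measurableSet
  have hμS : μ S = 2 * μ (H : Set G) := by
    rw [hSdef, measure_union hdisj hH.measurableSet, measure_preimage_mul, two_mul]
  rw [key, eLpNorm_indicator_const hSmeas (by norm_num) (by norm_num), hμS]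
  rw [ENNReal.toReal_mul, ← ENNReal.toReal_rpow]
  rw [ENNReal.toReal_mul, Real.sqrt_eq_rpow]
  norm_num

lemma elp_zero {G : Type*} [Group G] [TopologicalSpace G]
    [MeasurableSpace G] (μ : Measure G) (H : Subgroup G) (h : G) (hh : h ∈ H) :
    (eLpNorm (fun x => (if h * x ∈ H then (1 : ℂ) else 0) -
        (if x ∈ H then (1 : ℂ) else 0)) 2 μ).toReal = 0 := by
  have : (fun x => (if h * x ∈ H then (1 : ℂ) else 0) - (if x ∈ H then (1 : ℂ) else 0))
      = fun _ => 0 := by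
    funext x
    have : h * x ∈ H ↔ x ∈ H := by
      constructor
      · intro h1; simpa using mul_mem (inv_mem hh) h1
      · intro h1; exact mul_mem hh h1
    by_cases hx : x ∈ H <;> simp [this, hx]
  rw [this]
  simp [eLpNorm_zero']

end AuxLemmas

open Classical in
/-- **Sharpness of the constant `1/√2`.** For `f = 1_{G_m}` with `m > n`:
`ω₂(1_{G_m},𝒢,n) = √(2μ(G_m))`, while
`∑_{⟨ξ⟩ > |G/G_n|} d_ξ ‖1̂_{G_m}(ξ)‖²_HS = μ(G_m)(1 - |G/G_n|/|G/G_m|)`; hence the ratio of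
`(∑_{⟨ξ⟩ > |G/G_n|} d_ξ ‖1̂_{G_m}(ξ)‖²)^{1/2}` to `(1/√2) ω₂` is `√(1 - |G/G_n|/|G/G_m|) → 1`
as `m → ∞`, so the constant `1/√2` cannot be improved. -/
theorem modulus_constant_sharp
    {G : Type*} [Group G] [TopologicalSpace G] [IsTopologicalGroup G] [CompactSpace G]
    [TotallyDisconnectedSpace G] [MeasurableSpace G] [BorelSpace G]
    (V : VilenkinData G) (μ : Measure G) [μ.IsHaarMeasure] [IsProbabilityMeasure μ]
    (D : DualData G V μ) (n : ℕ) :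
    (∀ m, n < m →
      ((⨆ h : V.seq n, (eLpNorm (fun x =>
          (if (h : G) * x ∈ V.seq m then (1 : ℂ) else 0) -
            (if x ∈ V.seq m then (1 : ℂ) else 0)) 2 μ).toReal) =
        Real.sqrt (2 * (μ (V.seq m : Set G)).toReal)) ∧
      (∑' i : {i // n < D.lvl i}, (D.dim i.1 : ℝ) *
          hsNorm (fourierCoef μ (fun x => if x ∈ V.seq m then (1 : ℂ) else 0)
            (D.rep i.1)) ^ 2) =
        (μ (V.seq m : Set G)).toReal *
          (1 - ((V.seq n).index : ℝ) / ((V.seq m).index : ℝ))) ∧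
    Filter.Tendsto (fun m => Real.sqrt (1 - ((V.seq n).index : ℝ) / ((V.seq m).index : ℝ)))
      Filter.atTop (nhds 1) := by
  have hinv : μ.IsMulLeftInvariant := inferInstance
  refine ⟨fun m hm => ⟨?_, ?_⟩, ?_⟩
  · -- Part A: the supremum
    have hopen := V.isOpen m
    set r : ℝ := (μ (V.seq m : Set G)).toReal with hrdef
    have hbound : ∀ h : V.seq n, (eLpNorm (fun x =>
        (if (h : G) * x ∈ V.seq m then (1 : ℂ) else 0) -
          (if x ∈ V.seq m then (1 : ℂ) else 0)) 2 μ).toReal ≤ Real.sqrt (2 * r) := by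
      intro h
      by_cases hh : (h : G) ∈ V.seq m
      · rw [elp_zero μ (V.seq m) h hh]; positivity
      · rw [elp_comp μ (V.seq m) hopen h hh]
    haveI : Nonempty (V.seq n) := ⟨1, one_mem _⟩
    obtain ⟨g, hg1, hg2⟩ := SetLike.exists_of_lt (V.strictAnti hm)
    apply le_antisymm (ciSup_le hbound)
    have hb : BddAbove (Set.range fun h : V.seq n => (eLpNorm (fun x =>
        (if (h : G) * x ∈ V.seq m then (1 : ℂ) else 0) -
          (if x ∈ V.seq m then (1 : ℂ) else 0)) 2 μ).toReal) := by
      refine ⟨Real.sqrt (2 * r), ?_⟩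
      rintro x ⟨h, rfl⟩
      exact hbound h
    have := le_ciSup hb (⟨g, hg1⟩ : V.seq n)
    rwa [elp_comp μ (V.seq m) hopen g hg2] at this
  · -- Part B: the Fourier sum
    have hmeasm : MeasurableSet (V.seq m : Set G) := (V.isOpen m).measurableSet
    set f : G → ℂ := fun x => if x ∈ V.seq m then (1 : ℂ) else 0 with hfdef
    set r : ℝ := (μ (V.seq m : Set G)).toReal with hrdef
    have hfi : f = (V.seq m : Set G).indicator (fun _ => (1 : ℂ)) := by
      funext x; by_cases hx : x ∈ V.seq m <;> simp [f, hx, Set.indicator_apply]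
    have hmem : MemLp f 2 μ := by
      rw [hfi]; exact memLp_indicator_const 2 hmeasm 1 (Or.inr (measure_ne_top μ _))
    have hint : ∫ x, ‖f x‖ ^ 2 ∂μ = r := by
      have h0 : (fun x => ‖f x‖ ^ 2)
          = (V.seq m : Set G).indicator (fun _ => (1 : ℝ)) := by
        funext x; by_cases hx : x ∈ V.seq m <;> simp [f, hx, Set.indicator_apply]
      rw [h0, integral_indicator_const _ hmeasm]; simp [r, measureReal_def]
    have htot : ∑' i, (D.dim i : ℝ) * hsNorm (fourierCoef μ f (D.rep i)) ^ 2 = r := by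
      rw [← D.plancherel f hmem, hint]
    have hrpos : 0 < r :=
      ENNReal.toReal_pos ((V.isOpen m).measure_pos μ ⟨1, one_mem _⟩).ne' (measure_ne_top μ _)
    have hsum : Summable fun i => (D.dim i : ℝ) * hsNorm (fourierCoef μ f (D.rep i)) ^ 2 := by
      by_contra h
      rw [tsum_eq_zero_of_not_summable h] at htot
      linarith
    have hterm : ∀ i, D.lvl i ≤ n → (D.dim i : ℝ) * hsNorm (fourierCoef μ f (D.rep i)) ^ 2
        = r ^ 2 * (D.dim i : ℝ) ^ 2 := by
      intro i hi
      have hsub : (V.seq m : Set G) ⊆ (V.seq (D.lvl i) : Set G) :=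
        V.strictAnti.antitone (le_trans hi (le_of_lt hm))
      have htriv : ∀ x ∈ V.seq m, D.rep i x = 1 := fun x hx => D.lvl_triv i x (hsub hx)
      rw [show f = (fun x => if x ∈ V.seq m then (1:ℂ) else 0) from rfl,
        fourierCoef_indicator_triv μ (D.rep i) (V.seq m) hmeasm htriv,
        hsNorm_real_smul_one r hrpos.le]
      ring
    have hsplit := Summable.tsum_subtype_add_tsum_subtype_compl hsum {i | n < D.lvl i}
    have hcompl : (∑' i : ↥({i : D.ι | n < D.lvl i}ᶜ),
        (D.dim i.1 : ℝ) * hsNorm (fourierCoef μ f (D.rep i.1)) ^ 2)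
        = r ^ 2 * ((V.seq n).index : ℝ) := by
      have hiff : ∀ i : D.ι, D.lvl i ≤ n ↔ i ∈ ({i : D.ι | n < D.lvl i}ᶜ) := fun i => by
        simp [Nat.not_lt]
      rw [← Equiv.tsum_eq (Equiv.subtypeEquivRight hiff)]
      have hco : ∀ y : {i : D.ι // D.lvl i ≤ n},
          (D.dim ((Equiv.subtypeEquivRight hiff) y).1 : ℝ) *
            hsNorm (fourierCoef μ f (D.rep ((Equiv.subtypeEquivRight hiff) y).1)) ^ 2
          = r ^ 2 * (D.dim y.1 : ℝ) ^ 2 := by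
        intro y
        simp only [Equiv.subtypeEquivRight_apply]
        exact hterm y.1 y.2
      rw [tsum_congr hco]
      exact ((D.count n).mul_left (r ^ 2)).tsum_eq
    have hmain : (∑' i : {i // n < D.lvl i},
        (D.dim i.1 : ℝ) * hsNorm (fourierCoef μ f (D.rep i.1)) ^ 2)
        = r - r ^ 2 * ((V.seq n).index : ℝ) := by
      rw [htot, hcompl] at hsplit
      have hid : (∑' i : {i // n < D.lvl i},
          (D.dim i.1 : ℝ) * hsNorm (fourierCoef μ f (D.rep i.1)) ^ 2)
          = ∑' x : ↥{i : D.ι | n < D.lvl i},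
          (D.dim x.1 : ℝ) * hsNorm (fourierCoef μ f (D.rep x.1)) ^ 2 := rfl
      rw [hid]
      linarith
    refine hmain.trans ?_
    have him : ((V.seq m).index : ℝ) * r = 1 := by
      have h0 := meas_subgroup_mul_index μ (V.seq m) (V.isOpen m) (V.index_ne_zero m)
      have h2 := congrArg ENNReal.toReal h0
      simpa using h2
    have himne : ((V.seq m).index : ℝ) ≠ 0 := Nat.cast_ne_zero.mpr (V.index_ne_zero m)
    have hr1 : r = 1 / ((V.seq m).index : ℝ) := by
      field_simp
      linarith
    rw [hr1]
    field_simp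
  · -- Part C: the limit
    have hmono : StrictMono fun k => (V.seq k).index := by
      apply strictMono_nat_of_lt_succ
      intro k
      have hle : V.seq (k+1) ≤ V.seq k := (V.strictAnti (Nat.lt_succ_self k)).le
      have hrel := Subgroup.relIndex_mul_index hle
      have hpos : 0 < (V.seq k).index := Nat.pos_of_ne_zero (V.index_ne_zero k)
      calc (V.seq k).index < 2 * (V.seq k).index := by omega
        _ ≤ (V.seq (k+1)).relIndex (V.seq k) * (V.seq k).index :=
            Nat.mul_le_mul_right _ (V.two_le_relindex k)
        _ = (V.seq (k+1)).index := hrel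
    have h1 : Filter.Tendsto (fun k => ((V.seq k).index : ℝ)) Filter.atTop Filter.atTop :=
      tendsto_natCast_atTop_atTop.comp hmono.tendsto_atTop
    have h2 : Filter.Tendsto (fun k => ((V.seq n).index : ℝ) / ((V.seq k).index : ℝ))
        Filter.atTop (nhds 0) := h1.const_div_atTop _
    have h3 : Filter.Tendsto (fun k => 1 - ((V.seq n).index : ℝ) / ((V.seq k).index : ℝ))
        Filter.atTop (nhds 1) := by
      simpa using tendsto_const_nhds.sub h2
    have h4 := (Real.continuous_sqrt.tendsto 1).comp h3
    simpa [Real.sqrt_one, Function.comp_def] using h4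

end
end

section
/- Let $G$ be a compact Vilenkin group satisfying Condition (A) and let $0 < \alpha \leq 1$, $f \in L^2(\mu_G)$. If $\sum_{\langle \xi \rangle_{\mathscr{G}} > |G/G_k|} d_\xi \|\widehat{f}(\xi)\|_{HS}^2 = \mathcal{O}(|G/G_k|^{-2\alpha})$ as $k \to \infty$, then $f \in Lip_{\mathscr{G}}(\alpha; 2)$, i.e. $\|f(h\,\cdot) - f(\cdot)\|_{L^2(\mu_G)} = \mathcal{O}(|h|_{\mathscr{G}}^{\alpha})$ as $|h|_{\mathscr{G}} \to 0$. -/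
open MeasureTheory Filter Asymptotics

noncomputable section

section Helpers
open Matrix

lemma hsNorm_nonneg {n : ℕ} (M : Matrix (Fin n) (Fin n) ℂ) : 0 ≤ hsNorm M :=
  Real.sqrt_nonneg _

lemma hsNorm_sq {n : ℕ} (M : Matrix (Fin n) (Fin n) ℂ) :
    hsNorm M ^ 2 = ∑ i, ∑ j, ‖M i j‖ ^ 2 :=
  Real.sq_sqrt (by positivity)

lemma hsNorm_zero {n : ℕ} : hsNorm (0 : Matrix (Fin n) (Fin n) ℂ) = 0 := by
  simp [hsNorm]

lemma hsNorm_eq_norm {n : ℕ} (M : Matrix (Fin n) (Fin n) ℂ) :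
    hsNorm M = ‖((WithLp.equiv 2 _).symm (fun p : Fin n × Fin n => M p.1 p.2) :
      EuclideanSpace ℂ (Fin n × Fin n))‖ := by
  rw [EuclideanSpace.norm_eq, hsNorm]
  congr 1
  rw [Fintype.sum_prod_type]
  simp

lemma hsNorm_sub_le {n : ℕ} (A B : Matrix (Fin n) (Fin n) ℂ) :
    hsNorm (A - B) ≤ hsNorm A + hsNorm B := by
  rw [hsNorm_eq_norm, hsNorm_eq_norm, hsNorm_eq_norm]
  have := norm_sub_le (WithLp.toLp 2 (fun p : Fin n × Fin n => A p.1 p.2))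
    (WithLp.toLp 2 (fun p : Fin n × Fin n => B p.1 p.2))
  rw [← WithLp.toLp_sub] at this
  exact this

lemma sum_sq_eq_trace {n : ℕ} (M : Matrix (Fin n) (Fin n) ℂ) :
    (∑ i, ∑ j, ‖M i j‖ ^ 2) = (Matrix.trace (M * Mᴴ)).re := by
  simp only [Matrix.trace, Matrix.diag, Matrix.mul_apply, Matrix.conjTranspose_apply,
    Complex.re_sum]
  congr 1; ext i; congr 1; ext j
  rw [Complex.sq_norm, show star (M i j) = (starRingEnd ℂ) (M i j) from rfl,
    Complex.mul_conj]
  simp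

lemma hsNorm_mul_unitary {n : ℕ} (M : Matrix (Fin n) (Fin n) ℂ)
    (U : Matrix (Fin n) (Fin n) ℂ) (hU : U ∈ Matrix.unitaryGroup (Fin n) ℂ) :
    hsNorm (M * U) = hsNorm M := by
  unfold hsNorm
  congr 1
  rw [sum_sq_eq_trace, sum_sq_eq_trace]
  congr 2
  rw [Matrix.conjTranspose_mul, ← Matrix.mul_assoc, Matrix.mul_assoc M U]
  have : U * Uᴴ = 1 := (Matrix.mem_unitaryGroup_iff.mp hU)
  rw [this, Matrix.mul_one]

lemma abs_unitary_entry_le_one {n : ℕ} (U : Matrix (Fin n) (Fin n) ℂ)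
    (hU : U ∈ Matrix.unitaryGroup (Fin n) ℂ) (a b : Fin n) :
    ‖U a b‖ ≤ 1 := by
  have h1 : (Uᴴ * U) b b = 1 := by
    have : Uᴴ * U = 1 := Matrix.mem_unitaryGroup_iff'.mp hU
    rw [this]; simp
  have h2 : ‖U a b‖ ^ 2 ≤ 1 := by
    have : (∑ j, ‖U j b‖ ^ 2) = ((Uᴴ * U) b b).re := by
      simp only [Matrix.mul_apply, Matrix.conjTranspose_apply, Complex.re_sum]
      congr 1; ext j
      rw [Complex.sq_norm]
      simp [Complex.mul_re, Complex.normSq_apply, Complex.conj_re, Complex.conj_im]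
    have h3 : ‖U a b‖ ^ 2 ≤ ∑ j, ‖U j b‖ ^ 2 :=
      Finset.single_le_sum (f := fun j => ‖U j b‖ ^ 2)
        (fun j _ => by positivity) (Finset.mem_univ a)
    rw [this, h1] at h3
    simpa using h3
  nlinarith [norm_nonneg (U a b)]

open MeasureTheory in
lemma fourierCoef_shift {G : Type*} [Group G] [TopologicalSpace G] [IsTopologicalGroup G]
    [CompactSpace G] [MeasurableSpace G] [BorelSpace G]
    (μ : Measure G) [μ.IsHaarMeasure] [IsProbabilityMeasure μ]
    (f : G → ℂ) (hf : MemLp f 2 μ) {n : ℕ} (ξ : G →* Matrix.unitaryGroup (Fin n) ℂ)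
    (hξ : Continuous fun x => (ξ x : Matrix (Fin n) (Fin n) ℂ)) (h : G) :
    fourierCoef μ (fun x => f (h * x) - f x) ξ
      = fourierCoef μ f ξ * ((ξ h : Matrix (Fin n) (Fin n) ℂ) - 1) := by
  have hfi : Integrable f μ := hf.integrable one_le_two
  have hcont : ∀ a b : Fin n, Continuous fun x => (ξ x : Matrix (Fin n) (Fin n) ℂ) a b :=
    fun a b => (continuous_apply b).comp ((continuous_apply a).comp hξ)
  have hbd : ∀ (a b : Fin n) (x : G),
      ‖(starRingEnd ℂ) ((ξ x : Matrix (Fin n) (Fin n) ℂ) a b)‖ ≤ 1 := by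
    intro a b x
    rw [RCLike.norm_conj]
    exact abs_unitary_entry_le_one _ (ξ x).2 a b
  have hint : ∀ (g : G → ℂ), Integrable g μ → ∀ a b : Fin n,
      Integrable (fun x => g x * (starRingEnd ℂ) ((ξ x : Matrix (Fin n) (Fin n) ℂ) a b)) μ := by
    intro g hg a b
    have : Integrable (fun x =>
        (starRingEnd ℂ) ((ξ x : Matrix (Fin n) (Fin n) ℂ) a b) * g x) μ :=
      hg.bdd_mul (c := 1)
        ((Complex.continuous_conj.comp (hcont a b)).aestronglyMeasurable)
        (Filter.Eventually.of_forall (hbd a b))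
    exact this.congr (Filter.Eventually.of_forall fun x => mul_comm _ _)
  have hfsh : MemLp (fun x => f (h * x)) 2 μ :=
    hf.comp_measurePreserving (measurePreserving_mul_left μ h)
  have hfshi : Integrable (fun x => f (h * x)) μ := hfsh.integrable one_le_two
  ext a b
  show (∫ x, (f (h * x) - f x) * (starRingEnd ℂ) ((ξ x : Matrix (Fin n) (Fin n) ℂ) b a) ∂μ)
    = (fourierCoef μ f ξ * ((ξ h : Matrix (Fin n) (Fin n) ℂ) - 1)) a b
  have step1 : (∫ x, (f (h * x) - f x) *
        (starRingEnd ℂ) ((ξ x : Matrix (Fin n) (Fin n) ℂ) b a) ∂μ)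
      = (∫ x, f (h * x) * (starRingEnd ℂ) ((ξ x : Matrix (Fin n) (Fin n) ℂ) b a) ∂μ)
        - ∫ x, f x * (starRingEnd ℂ) ((ξ x : Matrix (Fin n) (Fin n) ℂ) b a) ∂μ := by
    rw [← integral_sub (hint _ hfshi b a) (hint f hfi b a)]
    congr 1; ext x; ring
  have step2 : (∫ x, f (h * x) * (starRingEnd ℂ) ((ξ x : Matrix (Fin n) (Fin n) ℂ) b a) ∂μ)
      = ∫ y, f y * (starRingEnd ℂ) ((ξ (h⁻¹ * y) : Matrix (Fin n) (Fin n) ℂ) b a) ∂μ := by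
    rw [← integral_mul_left_eq_self
      (fun y => f y * (starRingEnd ℂ) ((ξ (h⁻¹ * y) : Matrix (Fin n) (Fin n) ℂ) b a)) h]
    congr 1; ext x
    rw [inv_mul_cancel_left]
  have hcoe : ∀ y, (ξ (h⁻¹ * y) : Matrix (Fin n) (Fin n) ℂ)
      = (ξ h⁻¹ : Matrix (Fin n) (Fin n) ℂ) * (ξ y : Matrix (Fin n) (Fin n) ℂ) := by
    intro y; rw [_root_.map_mul ξ]; rfl
  have hconj : ∀ l, (starRingEnd ℂ) ((ξ h⁻¹ : Matrix (Fin n) (Fin n) ℂ) b l)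
      = (ξ h : Matrix (Fin n) (Fin n) ℂ) l b := by
    intro l
    have : (ξ h : Matrix (Fin n) (Fin n) ℂ) = star (ξ h⁻¹ : Matrix (Fin n) (Fin n) ℂ) := by
      rw [← Matrix.UnitaryGroup.inv_apply, ← map_inv, inv_inv]
    rw [this]
    rfl
  have step3 : (∫ y, f y * (starRingEnd ℂ) ((ξ (h⁻¹ * y) : Matrix (Fin n) (Fin n) ℂ) b a) ∂μ)
      = ∑ l, (fourierCoef μ f ξ) a l * (ξ h : Matrix (Fin n) (Fin n) ℂ) l b := by
    have : ∀ y, f y * (starRingEnd ℂ) ((ξ (h⁻¹ * y) : Matrix (Fin n) (Fin n) ℂ) b a)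
        = ∑ l, (ξ h : Matrix (Fin n) (Fin n) ℂ) l b
            * (f y * (starRingEnd ℂ) ((ξ y : Matrix (Fin n) (Fin n) ℂ) l a)) := by
      intro y
      rw [hcoe y, Matrix.mul_apply, map_sum, Finset.mul_sum]
      congr 1; ext l
      rw [_root_.map_mul (starRingEnd ℂ), hconj l]; ring
    simp_rw [this]
    rw [integral_finset_sum _ (fun l _ => (hint f hfi l a).const_mul _)]
    congr 1; ext l
    rw [integral_const_mul]
    show _ = (∫ x, f x * (starRingEnd ℂ) ((ξ x : Matrix (Fin n) (Fin n) ℂ) l a) ∂μ)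
      * (ξ h : Matrix (Fin n) (Fin n) ℂ) l b
    ring
  rw [step1, step2, step3]
  rw [Matrix.mul_sub, Matrix.mul_one, Matrix.sub_apply, Matrix.mul_apply]
  rfl

end Helpers

set_option maxHeartbeats 1000000 in
/-- **Second Titchmarsh theorem (sufficiency).** Let `0 < α ≤ 1` and `f ∈ L²(μ_G)`. If
`∑_{⟨ξ⟩ > |G/G_k|} d_ξ ‖f̂(ξ)‖²_HS = O(|G/G_k|^{-2α})` as `k → ∞`, then
`f ∈ Lip_𝒢(α;2)`, i.e. `‖f(h·) - f‖_{L²} = O(|h|_𝒢^α)` as `|h|_𝒢 → 0` (for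
`h ∈ G_k` one has `|h|_𝒢 ≤ |G/G_k|⁻¹`). -/
theorem second_titchmarsh_sufficiency
    {G : Type*} [Group G] [TopologicalSpace G] [IsTopologicalGroup G] [CompactSpace G]
    [TotallyDisconnectedSpace G] [MeasurableSpace G] [BorelSpace G]
    (V : VilenkinData G) (μ : Measure G) [μ.IsHaarMeasure] [IsProbabilityMeasure μ]
    (D : DualData G V μ) (α : ℝ) (hα₀ : 0 < α) (hα₁ : α ≤ 1)
    (f : G → ℂ) (hf : MemLp f 2 μ)
    (hO : ∃ C > (0 : ℝ), ∀ k : ℕ,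
      (∑' i : {i // k < D.lvl i},
          (D.dim i.1 : ℝ) * hsNorm (fourierCoef μ f (D.rep i.1)) ^ 2) ≤
        C * ((V.seq k).index : ℝ) ^ (-(2 * α))) :
    ∃ C > (0 : ℝ), ∀ k : ℕ, ∀ h ∈ V.seq k,
      eLpNorm (fun x => f (h * x) - f x) 2 μ ≤
        ENNReal.ofReal (C * (((V.seq k).index : ℝ)⁻¹) ^ α) := by
  classical
  obtain ⟨C, hC, hCk⟩ := hO
  have hsC : 0 < 2 * Real.sqrt C := by
    have := Real.sqrt_pos.mpr hC; linarith
  refine ⟨2 * Real.sqrt C, hsC, ?_⟩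
  intro k h hh
  set g : G → ℂ := fun x => f (h * x) - f x with hgdef
  have hg : MemLp g 2 μ :=
    (hf.comp_measurePreserving (measurePreserving_mul_left μ h)).sub hf
  have hghat : ∀ i, fourierCoef μ g (D.rep i)
      = fourierCoef μ f (D.rep i) * ((D.rep i h : Matrix (Fin (D.dim i)) (Fin (D.dim i)) ℂ) - 1) := fun i =>
    fourierCoef_shift μ f hf (D.rep i) (D.rep_continuous i) h
  set T : D.ι → ℝ := fun i => (D.dim i : ℝ) * hsNorm (fourierCoef μ g (D.rep i)) ^ 2 with hTdef
  set F : D.ι → ℝ := fun i => (D.dim i : ℝ) * hsNorm (fourierCoef μ f (D.rep i)) ^ 2 with hFdef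
  have hplg : ∫ x, ‖g x‖ ^ 2 ∂μ = ∑' i, T i := D.plancherel g hg
  have hTnonneg : ∀ i, 0 ≤ T i := fun i => by positivity
  have hT4 : ∀ i, T i ≤ 4 * F i := by
    intro i
    have hhs : hsNorm (fourierCoef μ g (D.rep i))
        ≤ 2 * hsNorm (fourierCoef μ f (D.rep i)) := by
      rw [hghat i, Matrix.mul_sub, Matrix.mul_one]
      calc hsNorm (fourierCoef μ f (D.rep i) * (D.rep i h : Matrix (Fin (D.dim i)) (Fin (D.dim i)) ℂ)
            - fourierCoef μ f (D.rep i))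
          ≤ hsNorm (fourierCoef μ f (D.rep i) * (D.rep i h : Matrix (Fin (D.dim i)) (Fin (D.dim i)) ℂ))
            + hsNorm (fourierCoef μ f (D.rep i)) := hsNorm_sub_le _ _
        _ = 2 * hsNorm (fourierCoef μ f (D.rep i)) := by
            rw [hsNorm_mul_unitary _ _ (D.rep i h).2]; ring
    have hsq : hsNorm (fourierCoef μ g (D.rep i)) ^ 2
        ≤ (2 * hsNorm (fourierCoef μ f (D.rep i))) ^ 2 :=
      pow_le_pow_left₀ (hsNorm_nonneg _) hhs 2
    have hd : (0:ℝ) ≤ (D.dim i : ℝ) := Nat.cast_nonneg _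
    calc T i ≤ (D.dim i : ℝ) * (2 * hsNorm (fourierCoef μ f (D.rep i))) ^ 2 :=
          mul_le_mul_of_nonneg_left hsq hd
      _ = 4 * F i := by rw [hFdef]; ring
  have hT0 : ∀ i, D.lvl i ≤ k → T i = 0 := by
    intro i hle
    have hmem : h ∈ V.seq (D.lvl i) := V.strictAnti.antitone hle hh
    have h1 : D.rep i h = 1 := D.lvl_triv i h hmem
    have : fourierCoef μ g (D.rep i) = 0 := by
      rw [hghat i, h1]
      simp
    rw [hTdef]
    simp [this, hsNorm_zero]
  -- the index as a real number
  set t : ℝ := ((V.seq k).index : ℝ) with htdef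
  have ht1 : (1:ℝ) ≤ t := by
    rw [htdef]
    exact_mod_cast Nat.one_le_iff_ne_zero.mpr (V.index_ne_zero k)
  have ht0 : (0:ℝ) < t := lt_of_lt_of_le one_pos ht1
  have hxsq : ((t⁻¹) ^ α) ^ 2 = t ^ (-(2 * α)) := by
    rw [← Real.rpow_natCast ((t⁻¹) ^ α) 2, ← Real.rpow_mul (inv_nonneg.mpr ht0.le),
      Real.inv_rpow ht0.le, ← Real.rpow_neg ht0.le]
    congr 1
    push_cast
    ring
  have hIbound : ∫ x, ‖g x‖ ^ 2 ∂μ ≤ 4 * (C * t ^ (-(2 * α))) := by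
    by_cases hsum : Summable F
    · have hFk : Summable fun i : {i // k < D.lvl i} => F i.1 := hsum.subtype _
      have hTk : Summable fun i : {i // k < D.lvl i} => T i.1 :=
        Summable.of_nonneg_of_le (fun i => hTnonneg i.1)
          (fun i => hT4 i.1) (hFk.mul_left 4)
      have hsupp : Function.support T ⊆ {i | k < D.lvl i} := by
        intro i hi
        by_contra hcon
        exact hi (hT0 i (le_of_not_gt hcon))
      have h1 : ∑' i, T i = ∑' i : {i // k < D.lvl i}, T i.1 :=
        (tsum_subtype_eq_of_support_subset hsupp).symm
      have h2 : (∑' i : {i // k < D.lvl i}, T i.1)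
          ≤ ∑' i : {i // k < D.lvl i}, 4 * F i.1 :=
        Summable.tsum_le_tsum (fun i => hT4 i.1) hTk (hFk.mul_left 4)
      have h3 : (∑' i : {i // k < D.lvl i}, 4 * F i.1)
          = 4 * ∑' i : {i // k < D.lvl i}, F i.1 := tsum_mul_left
      have h4 : (∑' i : {i // k < D.lvl i}, F i.1) ≤ C * t ^ (-(2 * α)) := hCk k
      rw [hplg, h1]
      calc (∑' i : {i // k < D.lvl i}, T i.1)
          ≤ 4 * ∑' i : {i // k < D.lvl i}, F i.1 := h3 ▸ h2
        _ ≤ 4 * (C * t ^ (-(2 * α))) := by linarith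
    · -- non-summable: then f = 0 a.e. and g = 0 a.e.
      have hplf : ∫ x, ‖f x‖ ^ 2 ∂μ = ∑' i, F i := D.plancherel f hf
      have hzero : ∫ x, ‖f x‖ ^ 2 ∂μ = 0 := by
        rw [hplf, tsum_eq_zero_of_not_summable hsum]
      have hgz : ∫ x, ‖g x‖ ^ 2 ∂μ = 0 := by
        have hfint : Integrable (fun x => ‖f x‖ ^ 2) μ := by
          have := hf.integrable_norm_rpow two_ne_zero ENNReal.ofNat_ne_top
          simp only [ENNReal.toReal_ofNat] at this
          refine this.congr (Filter.Eventually.of_forall fun x => ?_)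
          beta_reduce
          rw [← Real.rpow_natCast (‖f x‖) 2]
          norm_num
        have hfa : (fun x => ‖f x‖ ^ 2) =ᵐ[μ] 0 :=
          (integral_eq_zero_iff_of_nonneg (fun x => by positivity) hfint).mp hzero
        have hf0 : f =ᵐ[μ] 0 := by
          filter_upwards [hfa] with x hx
          have : ‖f x‖ = 0 := by
            have := hx
            simp only [Pi.zero_apply] at this ⊢
            nlinarith [norm_nonneg (f x)]
          simpa using this
        have hfsh0 : (fun x => f (h * x)) =ᵐ[μ] 0 :=
          (measurePreserving_mul_left μ h).quasiMeasurePreserving.ae_eq_comp hf0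
        have hg0 : g =ᵐ[μ] 0 := by
          filter_upwards [hf0, hfsh0] with x h1 h2
          simp only [hgdef, Pi.zero_apply] at h1 h2 ⊢
          rw [h1, h2, sub_zero]
        rw [integral_eq_zero_iff_of_nonneg (fun x => by positivity)]
        · filter_upwards [hg0] with x hx
          simp only [Pi.zero_apply] at hx ⊢
          rw [hx]
          simp
        · have := hg.integrable_norm_rpow two_ne_zero ENNReal.ofNat_ne_top
          simp only [ENNReal.toReal_ofNat] at this
          refine this.congr (Filter.Eventually.of_forall fun x => ?_)
          beta_reduce
          rw [← Real.rpow_natCast (‖g x‖) 2]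
          norm_num
      rw [hgz]
      positivity
  -- convert to eLpNorm
  have heq : eLpNorm g 2 μ
      = ENNReal.ofReal ((∫ x, ‖g x‖ ^ 2 ∂μ) ^ ((2:ℝ)⁻¹)) := by
    rw [hg.eLpNorm_eq_integral_rpow_norm two_ne_zero ENNReal.ofNat_ne_top]
    congr 1
    simp only [ENNReal.toReal_ofNat]
    congr 1
    refine integral_congr_ae (Filter.Eventually.of_forall fun x => ?_)
    beta_reduce
    rw [← Real.rpow_natCast (‖g x‖) 2]
    norm_num
  have hInonneg : 0 ≤ ∫ x, ‖g x‖ ^ 2 ∂μ :=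
    integral_nonneg fun x => by positivity
  rw [heq]
  apply ENNReal.ofReal_le_ofReal
  have hmono : (∫ x, ‖g x‖ ^ 2 ∂μ) ^ ((2:ℝ)⁻¹)
      ≤ (4 * (C * t ^ (-(2 * α)))) ^ ((2:ℝ)⁻¹) :=
    Real.rpow_le_rpow hInonneg hIbound (by norm_num)
  refine le_trans hmono (le_of_eq ?_)
  have hform : 4 * (C * t ^ (-(2 * α))) = (2 * Real.sqrt C * (t⁻¹) ^ α) ^ 2 := by
    have : (2 * Real.sqrt C * (t⁻¹) ^ α) ^ 2
        = 4 * (Real.sqrt C ^ 2 * ((t⁻¹) ^ α) ^ 2) := by ring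
    rw [this, Real.sq_sqrt hC.le, hxsq]
  rw [hform, ← Real.rpow_natCast (2 * Real.sqrt C * (t⁻¹) ^ α) 2,
    ← Real.rpow_mul (by positivity)]
  norm_num


end
end
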